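/- arXiv:2209.08390 — 2 statements merged into one kernel-verified Lean document; each statement's English description precedes it below -/
import Mathlib

section
/- Suppose (G, 𝒫) is a relatively hyperbolic group pair. Then 𝒫 is C-almost malnormal for some constant C. -/
/-
Common definitions for formalizing "Connectedness of Bowditch Boundary of Dehn Fillings"
(Dasgupta).  We set up: Gromov hyperbolic graphs (four--point condition on the graph
metric), the Groves--Manning combinatorial cusped space, relative hyperbolicity of a
group pair, the Gromov (Bowditch) boundary of the cusped space, parabolic / two-ended /
elementary subgroups, actions on simplicial trees and splittings (relative to a
peripheral collection), acylindricity, peripheral splittings, the constant C(G,𝓟),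
almost malnormality, ends of groups, Dehn fillings and "sufficiently long" fillings,
and actions on ℝ-trees.
-/

open scoped Pointwise

universe u

noncomputable section

namespace RelHypDehn

/-! ### Gromov hyperbolicity of graphs -/

/-- The Gromov product of `x` and `y` at `w`, with respect to the combinatorial
(graph) metric of `X`. -/
def gromovProd {V : Type*} (X : SimpleGraph V) (x y w : V) : ℝ :=
  ((X.dist x w : ℝ) + (X.dist y w : ℝ) - (X.dist x y : ℝ)) / 2

/-- A graph is Gromov hyperbolic if its graph metric satisfies the four-point
condition for some δ ≥ 0. -/
def IsHyperbolicGraph {V : Type*} (X : SimpleGraph V) : Prop :=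
  ∃ δ : ℝ, 0 ≤ δ ∧ ∀ x y z w : V,
    min (gromovProd X x z w) (gromovProd X z y w) - δ ≤ gromovProd X x y w

/-! ### The cusped space of a group pair -/

/-- The ball of radius `k` in the word metric determined by the (symmetrized)
generating set `T`. -/
def wordBall {G : Type u} [Group G] (T : Set G) (k : ℕ) : Set G :=
  {g | ∃ l : List G, l.length ≤ k ∧ (∀ a ∈ l, a ∈ T ∨ a⁻¹ ∈ T) ∧ l.prod = g}

variable {G : Type u} [Group G]

/-- Vertices of the cusped space: the vertices of the Cayley graph of `G`, together
with, for each `P ∈ 𝓟`, each `x ∈ G` and each depth `n` (representing depth `n+1`),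
a vertex `(P, x, n)` of the combinatorial horoball over the coset `x P`. -/
abbrev CuspedVertex (G : Type u) [Group G] (𝓟 : Set (Subgroup G)) : Type u :=
  G ⊕ (𝓟 × G × ℕ)

/-- Adjacency in the Groves–Manning cusped space: Cayley edges, vertical horoball
edges, edges joining depth-one horoball vertices to the Cayley graph, and horizontal
horoball edges at depth `n+1` joining coset elements at distance at most `2^(n+1)`
in the word metric of the peripheral subgroup. -/
def cuspedRel (𝓟 : Set (Subgroup G)) (S : Set G) :
    CuspedVertex G 𝓟 → CuspedVertex G 𝓟 → Prop
  | Sum.inl x, Sum.inl y => x⁻¹ * y ∈ S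
  | Sum.inl x, Sum.inr ⟨_, y, n⟩ => x = y ∧ n = 0
  | Sum.inr ⟨_, x, n⟩, Sum.inl y => x = y ∧ n = 0
  | Sum.inr ⟨P, x, n⟩, Sum.inr ⟨Q, y, m⟩ =>
      P = Q ∧ ((x = y ∧ m = n + 1) ∨
        (n = m ∧ x⁻¹ * y ∈ wordBall (S ∩ (P.1 : Set G)) (2 ^ (n + 1))))

/-- The cusped space of the pair `(G, 𝓟)` with respect to the generating set `S`. -/
def cuspedGraph (𝓟 : Set (Subgroup G)) (S : Set G) : SimpleGraph (CuspedVertex G 𝓟) :=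
  SimpleGraph.fromRel (cuspedRel 𝓟 S)

/-- `S` is a finite generating set of `G` adapted to `𝓟`: it generates `G` and
`S ∩ P` generates `P` for each `P ∈ 𝓟`. -/
def Adapted (G : Type u) [Group G] (𝓟 : Set (Subgroup G)) (S : Finset G) : Prop :=
  Subgroup.closure (S : Set G) = ⊤ ∧
    ∀ P ∈ 𝓟, Subgroup.closure ((S : Set G) ∩ (P : Set G)) = P

/-- The pair `(G, 𝓟)` is relatively hyperbolic: `𝓟` is a finite collection of proper
subgroups, and for some adapted finite generating set the cusped space is Gromov
hyperbolic. -/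
def IsRelHyp (G : Type u) [Group G] (𝓟 : Set (Subgroup G)) : Prop :=
  𝓟.Finite ∧ (∀ P ∈ 𝓟, P ≠ ⊤) ∧
    ∃ S : Finset G, Adapted G 𝓟 S ∧ IsHyperbolicGraph (cuspedGraph 𝓟 (S : Set G))

/-! ### Gromov boundary of a hyperbolic graph -/

/-- A sequence converges at infinity if its Gromov products (at the basepoint `o`)
go to infinity. -/
def ConvergesAtInfinity {V : Type*} (X : SimpleGraph V) (o : V) (s : ℕ → V) : Prop :=
  ∀ M : ℝ, ∃ N : ℕ, ∀ m ≥ N, ∀ n ≥ N, M ≤ gromovProd X (s m) (s n) o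

/-- Two sequences converging at infinity are identified if their mutual Gromov
products go to infinity. -/
def seqRel {V : Type*} (X : SimpleGraph V) (o : V)
    (s t : {s : ℕ → V // ConvergesAtInfinity X o s}) : Prop :=
  ∀ M : ℝ, ∃ N : ℕ, ∀ m ≥ N, ∀ n ≥ N, M ≤ gromovProd X (s.1 m) (t.1 n) o

/-- The Gromov boundary of the graph `X` (for the cusped space of a relatively
hyperbolic pair this is the Bowditch boundary). -/
def GromovBoundary {V : Type*} (X : SimpleGraph V) (o : V) : Type _ :=
  Quot (seqRel X o)

/-- Extension of the Gromov product to the boundary. -/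
def boundaryProd {V : Type*} (X : SimpleGraph V) (o : V)
    (ξ η : GromovBoundary X o) : EReal :=
  ⨅ (s : {s : {s : ℕ → V // ConvergesAtInfinity X o s} // Quot.mk (seqRel X o) s = ξ})
    (t : {t : {t : ℕ → V // ConvergesAtInfinity X o t} // Quot.mk (seqRel X o) t = η}),
    Filter.liminf
      (fun p : ℕ × ℕ => ((gromovProd X (s.1.1 p.1) (t.1.1 p.2) o : ℝ) : EReal))
      Filter.atTop

/-- The topology on the Gromov boundary, generated by the standard basic
neighborhoods `{η | (ξ|η) > M}`. -/
instance gromovBoundaryTopology {V : Type*} (X : SimpleGraph V) (o : V) :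
    TopologicalSpace (GromovBoundary X o) :=
  TopologicalSpace.generateFrom
    {U | ∃ (ξ : GromovBoundary X o) (M : ℝ), U = {η | (M : EReal) < boundaryProd X o ξ η}}

/-- A topological space has a cut point if removing some point disconnects it. -/
def HasCutPoint (Z : Type*) [TopologicalSpace Z] : Prop :=
  ∃ z : Z, ¬ IsPreconnected ({z}ᶜ : Set Z)

/-- A topological space has no cut points. -/
def NoCutPoints (Z : Type*) [TopologicalSpace Z] : Prop :=
  ∀ z : Z, IsPreconnected ({z}ᶜ : Set Z)

/-- The Bowditch boundary of `(G, 𝓟)` is connected (for every adapted generating set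
witnessing relative hyperbolicity). -/
def BoundaryConnected (G : Type u) [Group G] (𝓟 : Set (Subgroup G)) : Prop :=
  ∀ S : Finset G, Adapted G 𝓟 S → IsHyperbolicGraph (cuspedGraph 𝓟 (S : Set G)) →
    ConnectedSpace (GromovBoundary (cuspedGraph 𝓟 (S : Set G)) (Sum.inl 1))

/-- The Bowditch boundary of `(G, 𝓟)` is connected and has no cut point. -/
def BoundaryConnNoCut (G : Type u) [Group G] (𝓟 : Set (Subgroup G)) : Prop :=
  ∀ S : Finset G, Adapted G 𝓟 S → IsHyperbolicGraph (cuspedGraph 𝓟 (S : Set G)) →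
    ConnectedSpace (GromovBoundary (cuspedGraph 𝓟 (S : Set G)) (Sum.inl 1)) ∧
      NoCutPoints (GromovBoundary (cuspedGraph 𝓟 (S : Set G)) (Sum.inl 1))

/-! ### Parabolic, two-ended, elementary subgroups -/

/-- The conjugate `g P g⁻¹` of a subgroup. -/
def conjSubgroup (g : G) (P : Subgroup G) : Subgroup G :=
  Subgroup.map (MulAut.conj g).toMonoidHom P

/-- A subgroup is parabolic if it is contained in a conjugate of a member of `𝓟`. -/
def IsParabolic (𝓟 : Set (Subgroup G)) (H : Subgroup G) : Prop :=
  ∃ P ∈ 𝓟, ∃ g : G, H ≤ conjSubgroup g P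

/-- A subgroup is two-ended iff it is virtually infinite cyclic. -/
def IsTwoEnded (H : Subgroup G) : Prop :=
  ∃ K : Subgroup G, K ≤ H ∧ Infinite K ∧ IsCyclic K ∧ (K.subgroupOf H).FiniteIndex

/-- A subgroup of a relatively hyperbolic pair is elementary if it is finite,
two-ended, or parabolic. -/
def IsElementary (𝓟 : Set (Subgroup G)) (H : Subgroup G) : Prop :=
  Finite H ∨ IsTwoEnded H ∨ IsParabolic 𝓟 H

/-- A maximal parabolic subgroup. -/
def IsMaxParabolic (𝓟 : Set (Subgroup G)) (M : Subgroup G) : Prop :=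
  IsParabolic 𝓟 M ∧ ∀ M' : Subgroup G, IsParabolic 𝓟 M' → M ≤ M' → M' = M

/-- The family of subgroups entering the definition of the constant `C(G,𝓟)`:
finite non-parabolic subgroups, and subgroups contained in the intersection of two
distinct maximal parabolic subgroups. -/
def CFamily (𝓟 : Set (Subgroup G)) : Set (Subgroup G) :=
  {F | (Finite F ∧ ¬ IsParabolic 𝓟 F) ∨
    ∃ M₁ M₂ : Subgroup G, IsMaxParabolic 𝓟 M₁ ∧ IsMaxParabolic 𝓟 M₂ ∧ M₁ ≠ M₂ ∧
      F ≤ M₁ ⊓ M₂}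

/-- The constant `C(G, 𝓟) = max { |F| : F ∈ CFamily }`. -/
def CGP (G : Type u) [Group G] (𝓟 : Set (Subgroup G)) : ℕ :=
  sSup {n : ℕ | ∃ F ∈ CFamily 𝓟, Nat.card F = n}

/-- A collection `𝓟` of subgroups is `C`-almost malnormal if
`|P₁ ∩ g P₂ g⁻¹| > C` implies `P₁ = P₂` and `g ∈ P₁`.  (Cardinality `> C` is
expressed by the existence of a finite subset with more than `C` elements, which is
also correct for infinite intersections.) -/
def AlmostMalnormal (𝓟 : Set (Subgroup G)) (C : ℕ) : Prop :=
  ∀ P₁ ∈ 𝓟, ∀ P₂ ∈ 𝓟, ∀ g : G,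
    (∃ t : Finset G, (t : Set G) ⊆ ((P₁ ⊓ conjSubgroup g P₂ : Subgroup G) : Set G) ∧
      C < t.card) →
    P₁ = P₂ ∧ g ∈ P₁

/-! ### Actions on simplicial trees and splittings -/

/-- An action of `G` by automorphisms on a simplicial tree. -/
structure GTreeAction (G : Type u) [Group G] where
  /-- the vertex set -/
  V : Type u
  /-- the graph -/
  graph : SimpleGraph V
  /-- the graph is a tree -/
  isTree : graph.IsTree
  /-- the action, as a homomorphism to permutations of the vertices -/
  act : G →* Equiv.Perm V
  /-- the action preserves adjacency -/
  adj_act : ∀ (g : G) (u v : V), graph.Adj u v → graph.Adj (act g u) (act g v)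

namespace GTreeAction

variable (T : GTreeAction G)

/-- Stabilizer of a vertex. -/
def stab (v : T.V) : Subgroup G where
  carrier := {g | T.act g v = v}
  one_mem' := by simp
  mul_mem' := by
    intro a b ha hb
    simp only [Set.mem_setOf_eq, map_mul, Equiv.Perm.mul_apply] at *
    rw [hb, ha]
  inv_mem' := by
    intro a ha
    simp only [Set.mem_setOf_eq] at *
    conv_lhs => rw [← ha]
    rw [← Equiv.Perm.mul_apply, ← map_mul, inv_mul_cancel, map_one, Equiv.Perm.one_apply]

/-- Pointwise stabilizer of the pair `{u, v}`; in a tree this is the pointwise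
stabilizer of the geodesic segment from `u` to `v`. -/
def pairStab (u v : T.V) : Subgroup G := T.stab u ⊓ T.stab v

/-- The action has no inversions. -/
def NoInversions : Prop :=
  ∀ (g : G) (u v : T.V), T.graph.Adj u v → T.act g u = v → T.act g v ≠ u

/-- The action has no global fixed point (i.e. the splitting is nontrivial). -/
def NoGlobalFix : Prop := ¬ ∃ v : T.V, ∀ g : G, T.act g v = v

/-- The action is minimal: there is no proper invariant subtree. -/
def Minimal : Prop :=
  ∀ W : Set T.V, W.Nonempty → (∀ g : G, ∀ v ∈ W, T.act g v ∈ W) →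
    (T.graph.induce W).Connected → W = Set.univ

/-- All edge stabilizers belong to the class `𝒜`. -/
def EdgesIn (𝒜 : Set (Subgroup G)) : Prop :=
  ∀ u v : T.V, T.graph.Adj u v → T.pairStab u v ∈ 𝒜

/-- Each member of `𝓟` fixes a vertex. -/
def Relative (𝓟 : Set (Subgroup G)) : Prop :=
  ∀ P ∈ 𝓟, ∃ v : T.V, ∀ p ∈ P, T.act p v = v

/-- The action is `(k, C)`-acylindrical: the pointwise stabilizer of any segment of
length at least `k + 1` has cardinality at most `C`. -/
def Acyl (k C : ℕ) : Prop :=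
  ∀ u v : T.V, k + 1 ≤ T.graph.dist u v →
    ∀ t : Finset G, (t : Set G) ⊆ ((T.pairStab u v : Subgroup G) : Set G) → t.card ≤ C

/-- `T` is a (nontrivial, minimal, inversion-free) splitting of `G` over the class
`𝒜`, relative to `𝓟`. -/
def IsSplittingOverRel (𝒜 𝓟 : Set (Subgroup G)) : Prop :=
  T.NoInversions ∧ T.NoGlobalFix ∧ T.Minimal ∧ T.EdgesIn 𝒜 ∧ T.Relative 𝓟

/-- `T` is a (nontrivial, minimal, inversion-free) splitting of `G` over the class
`𝒜` (not relative to any collection). -/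
def IsSplittingOver (𝒜 : Set (Subgroup G)) : Prop :=
  T.NoInversions ∧ T.NoGlobalFix ∧ T.Minimal ∧ T.EdgesIn 𝒜

end GTreeAction

/-- `G` splits over the class `𝒜` relative to `𝓟`. -/
def SplitsOverRel (G : Type u) [Group G] (𝒜 𝓟 : Set (Subgroup G)) : Prop :=
  ∃ T : GTreeAction G, T.IsSplittingOverRel 𝒜 𝓟

/-- `G` admits a `(k, C)`-acylindrical splitting over the class `𝒜` relative
to `𝓟`. -/
def SplitsOverRelAcyl (G : Type u) [Group G] (𝒜 𝓟 : Set (Subgroup G)) (k C : ℕ) : Prop :=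
  ∃ T : GTreeAction G, T.IsSplittingOverRel 𝒜 𝓟 ∧ T.Acyl k C

/-- `G` splits over the class `𝒜` (absolute version). -/
def SplitsOver (G : Type u) [Group G] (𝒜 : Set (Subgroup G)) : Prop :=
  ∃ T : GTreeAction G, T.IsSplittingOver 𝒜

/-- A proper (i.e. nontrivial) peripheral splitting of `(G, 𝓟)`: a minimal,
inversion-free action without global fixed point on a bipartite tree, such that the
vertex stabilizers of one color are precisely the conjugates of the members of `𝓟`. -/
def HasProperPeripheralSplitting (G : Type u) [Group G] (𝓟 : Set (Subgroup G)) : Prop :=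
  ∃ T : GTreeAction G, T.NoInversions ∧ T.NoGlobalFix ∧ T.Minimal ∧
    ∃ c : T.V → Bool,
      (∀ u v : T.V, T.graph.Adj u v → c u ≠ c v) ∧
      (∀ (g : G) (v : T.V), c (T.act g v) = c v) ∧
      ({H : Subgroup G | ∃ v : T.V, c v = true ∧ H = T.stab v} =
        {H : Subgroup G | ∃ P ∈ 𝓟, ∃ g : G, H = conjSubgroup g P})

/-- `G` is one-ended relative to `𝓟`: no nontrivial splitting over a finite subgroup
relative to `𝓟`. -/
def OneEndedRel (G : Type u) [Group G] (𝓟 : Set (Subgroup G)) : Prop :=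
  ¬ SplitsOverRel G {H : Subgroup G | Finite H} 𝓟

/-! ### Ends of groups -/

/-- The Cayley graph of `H` with respect to `S`. -/
def cayleyGraph (H : Type*) [Group H] (S : Set H) : SimpleGraph H :=
  SimpleGraph.fromRel (fun x y => x⁻¹ * y ∈ S)

/-- `H` (finitely generated) has more than one end: for some finite generating set,
removing some finite set of vertices of the Cayley graph leaves at least two infinite
connected components. -/
def HasMoreThanOneEnd (H : Type*) [Group H] : Prop :=
  ∃ S : Finset H, Subgroup.closure (S : Set H) = ⊤ ∧
    ∃ K : Finset H,
      ∃ c₁ c₂ : ((cayleyGraph H (S : Set H)).induce ((K : Set H)ᶜ)).ConnectedComponent,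
        c₁ ≠ c₂ ∧ c₁.supp.Infinite ∧ c₂.supp.Infinite

/-- A group is small if it contains no non-abelian free subgroup. -/
def IsSmall (H : Subgroup G) : Prop :=
  ¬ ∃ f : FreeGroup Bool →* G, Function.Injective f ∧ ∀ x, f x ∈ H

/-- A group is slender if all its subgroups are finitely generated. -/
def IsSlender (H : Type*) [Group H] : Prop :=
  ∀ K : Subgroup H, K.FG

/-- A polycyclic group: solvable, with every subgroup finitely generated. -/
def IsPolycyclic (H : Type*) [Group H] : Prop :=
  IsSolvable H ∧ IsSlender H

/-- A virtually polycyclic group. -/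
def IsVirtuallyPolycyclic (H : Type*) [Group H] : Prop :=
  ∃ K : Subgroup H, K.FiniteIndex ∧ IsPolycyclic K

/-! ### Dehn fillings -/

/-- The data of a Dehn filling of `(G, 𝓟)`: a choice of normal subgroup
`ker P ⊴ P` for each `P ∈ 𝓟`. -/
structure FillingKernels (G : Type u) [Group G] (𝓟 : Set (Subgroup G)) where
  /-- the filling kernels -/
  ker : Subgroup G → Subgroup G
  ker_le : ∀ P ∈ 𝓟, ker P ≤ P
  ker_norm : ∀ P ∈ 𝓟, ∀ p ∈ P, ∀ k ∈ ker P, p * k * p⁻¹ ∈ ker P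

namespace FillingKernels

variable {𝓟 : Set (Subgroup G)} (D : FillingKernels G 𝓟)

/-- The kernel of the filling: the normal closure of the union of the filling
kernels. -/
def K : Subgroup G := Subgroup.normalClosure (⋃ P ∈ 𝓟, ((D.ker P : Subgroup G) : Set G))

instance : (D.K).Normal := Subgroup.normalClosure_normal

/-- The filled group `Ḡ = G / K`. -/
def Filled : Type u := G ⧸ D.K

instance : Group D.Filled := inferInstanceAs (Group (G ⧸ D.K))

/-- The quotient map `G → Ḡ`. -/
def proj : G →* D.Filled := QuotientGroup.mk' D.K

/-- The image collection `𝓟̄`: the images of the members of `𝓟`. -/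
def fillPeriph : Set (Subgroup D.Filled) :=
  (fun P : Subgroup G => P.map D.proj) '' 𝓟

/-- The collection `𝓟̄^∞` of infinite members of `𝓟̄`. -/
def fillPeriphInf : Set (Subgroup D.Filled) :=
  {Q ∈ D.fillPeriph | Infinite Q}

/-- The filling avoids the finite set `B`. -/
def Avoids (B : Finset G) : Prop :=
  ∀ P ∈ 𝓟, ∀ b ∈ B, b ∉ D.ker P

/-- The filling is `𝓜`-finite: the filling kernel has finite index in every
peripheral subgroup which is finitely generated with more than one end. -/
def MFinite : Prop :=
  ∀ P ∈ 𝓟, (Group.FG P ∧ HasMoreThanOneEnd P) → ((D.ker P).subgroupOf P).FiniteIndex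

/-- The filling kernel is normal in `P`, as a subgroup of `P`. -/
theorem subNormal (P : Subgroup G) (hP : P ∈ 𝓟) : ((D.ker P).subgroupOf P).Normal := by
  constructor
  intro n hn g
  simp only [Subgroup.mem_subgroupOf] at hn ⊢
  simpa using D.ker_norm P hP g g.2 n hn

/-- The filling is co-slender: each `P / ker P` is slender. -/
def CoSlender : Prop :=
  ∀ P : Subgroup G, ∀ hP : P ∈ 𝓟,
    letI := D.subNormal P hP
    IsSlender (↥P ⧸ (D.ker P).subgroupOf P)

end FillingKernels

/-- A property `Q` holds for all sufficiently long fillings of `(G, 𝓟)`: there is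
a finite set `B ⊆ G \ {1}` such that `Q` holds for every filling whose kernels
avoid `B`. -/
def SuffLongFillings (G : Type u) [Group G] (𝓟 : Set (Subgroup G))
    (Q : FillingKernels G 𝓟 → Prop) : Prop :=
  ∃ B : Finset G, (1 : G) ∉ B ∧ ∀ D : FillingKernels G 𝓟, D.Avoids B → Q D

/-- A sequence of fillings is stably faithful: every nontrivial element of `G`
survives in all sufficiently late fillings. -/
def StablyFaithful {G : Type u} [Group G] {𝓟 : Set (Subgroup G)}
    (φ : ℕ → FillingKernels G 𝓟) : Prop :=
  ∀ g : G, g ≠ 1 → ∃ N : ℕ, ∀ i ≥ N, (φ i).proj g ≠ 1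

/-! ### ℝ-trees -/

/-- An ℝ-tree: a geodesic metric space in which every pair of points is joined by a
unique embedded arc. -/
structure IsRTree (X : Type*) [MetricSpace X] : Prop where
  geodesic : ∀ x y : X, ∃ f : ℝ → X, f 0 = x ∧ f (dist x y) = y ∧
    ∀ s ∈ Set.Icc (0 : ℝ) (dist x y), ∀ t ∈ Set.Icc (0 : ℝ) (dist x y),
      dist (f s) (f t) = |s - t|
  unique_arc : ∀ γ₁ γ₂ : Set.Icc (0 : ℝ) 1 → X, Continuous γ₁ → Continuous γ₂ →
    Function.Injective γ₁ → Function.Injective γ₂ →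
    γ₁ ⟨0, by norm_num⟩ = γ₂ ⟨0, by norm_num⟩ →
    γ₁ ⟨1, by norm_num⟩ = γ₂ ⟨1, by norm_num⟩ →
    Set.range γ₁ = Set.range γ₂

/-- An action of `G` by isometries on an ℝ-tree. -/
structure RTreeAction (G : Type u) [Group G] where
  /-- the underlying space -/
  X : Type u
  /-- the metric -/
  [metric : MetricSpace X]
  isRTree : IsRTree X
  /-- the action -/
  act : G → X → X
  isom : ∀ g : G, Isometry (act g)
  act_one : ∀ x : X, act 1 x = x
  act_mul : ∀ (g h : G) (x : X), act (g * h) x = act g (act h x)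

namespace RTreeAction

variable (T : RTreeAction G)

/-- Stabilizer of a point. -/
def stab (x : T.X) : Subgroup G where
  carrier := {g | T.act g x = x}
  one_mem' := T.act_one x
  mul_mem' := by
    intro a b ha hb
    simp only [Set.mem_setOf_eq] at *
    rw [T.act_mul, hb, ha]
  inv_mem' := by
    intro a ha
    simp only [Set.mem_setOf_eq] at *
    conv_lhs => rw [← ha]
    rw [← T.act_mul, inv_mul_cancel, T.act_one]

/-- The action has no global fixed point. -/
def NoGlobalFix : Prop := ¬ ∃ x : T.X, ∀ g : G, T.act g x = x

/-- The action is relative to `𝓟`: each member of `𝓟` fixes a point. -/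
def Relative (𝓟 : Set (Subgroup G)) : Prop :=
  ∀ P ∈ 𝓟, ∃ x : T.X, ∀ p ∈ P, T.act p x = x

/-- Arc stabilizers (pointwise stabilizers of nondegenerate arcs, which in an ℝ-tree
coincide with the stabilizers of their pairs of endpoints) are elementary. -/
def ElementaryArcStabs (𝓟 : Set (Subgroup G)) : Prop :=
  ∀ x y : T.X, x ≠ y → IsElementary 𝓟 (T.stab x ⊓ T.stab y)

end RTreeAction

end RelHypDehn

end

noncomputable section AuxMalnormal

namespace RelHypDehn

open SimpleGraph

variable {G : Type u} [Group G]

/-! ### word ball lemmas -/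

theorem wordBall_mono {T : Set G} {k k' : ℕ} (h : k ≤ k') :
    wordBall T k ⊆ wordBall T k' := by
  rintro g ⟨l, hl, ha, hp⟩
  exact ⟨l, hl.trans h, ha, hp⟩

theorem wordBall_subset {P : Subgroup G} {T : Set G} (hT : T ⊆ (P : Set G)) {k : ℕ}
    {g : G} (hg : g ∈ wordBall T k) : g ∈ P := by
  obtain ⟨l, -, ha, rfl⟩ := hg
  refine list_prod_mem (fun x hx => ?_)
  rcases ha x hx with h | h
  · exact hT h
  · exact P.inv_mem_iff.mp (hT h)

theorem exists_wordBall_of_mem_closure {T : Set G} {g : G}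
    (h : g ∈ Subgroup.closure T) : ∃ k, g ∈ wordBall T k := by
  rw [← Subgroup.mem_toSubmonoid, Subgroup.closure_toSubmonoid] at h
  obtain ⟨l, hl, hp⟩ := Submonoid.exists_list_of_mem_closure h
  refine ⟨l.length, l, le_rfl, fun a ha => ?_, hp⟩
  rcases hl a ha with h' | h'
  · exact Or.inl h'
  · exact Or.inr (Set.mem_inv.mp h')

theorem wordBall_finite {T : Set G} (hT : T.Finite) (k : ℕ) : (wordBall T k).Finite := by
  induction k with
  | zero =>
    refine (Set.finite_singleton (1 : G)).subset ?_
    rintro g ⟨l, hl, -, rfl⟩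
    rw [Set.mem_singleton_iff, List.eq_nil_of_length_eq_zero (Nat.le_zero.mp hl)]
    rfl
  | succ k ih =>
    have hsub : wordBall T (k + 1) ⊆
        wordBall T k ∪ ⋃ a ∈ T ∪ T⁻¹, (fun x => a * x) '' wordBall T k := by
      rintro g ⟨l, hl, ha, rfl⟩
      cases l with
      | nil => exact Or.inl ⟨[], Nat.zero_le _, by simp, rfl⟩
      | cons b l' =>
        right
        have hb : b ∈ T ∪ T⁻¹ := by
          rcases ha b List.mem_cons_self with h | h
          · exact Or.inl h
          · exact Or.inr (Set.mem_inv.mpr h)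
        have hl' : l'.prod ∈ wordBall T k := by
          refine ⟨l', ?_, fun x hx => ha x (List.mem_cons_of_mem _ hx), rfl⟩
          simpa using Nat.succ_le_succ_iff.mp (by simpa using hl)
        exact Set.mem_biUnion hb ⟨l'.prod, hl', (List.prod_cons).symm⟩
    exact (ih.union ((hT.union hT.inv).biUnion fun a _ => ih.image _)).subset hsub

/-! ### basic cusped graph lemmas -/

variable {𝓟 : Set (Subgroup G)}

theorem cusped_adj_iff {S : Set G} {u v : CuspedVertex G 𝓟} :
    (cuspedGraph 𝓟 S).Adj u v ↔ u ≠ v ∧ (cuspedRel 𝓟 S u v ∨ cuspedRel 𝓟 S v u) :=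
  SimpleGraph.fromRel_adj _ _ _

/-- Left translation on the cusped vertex set. -/
def cmul (c : G) : CuspedVertex G 𝓟 → CuspedVertex G 𝓟
  | Sum.inl x => Sum.inl (c * x)
  | Sum.inr ⟨P, x, n⟩ => Sum.inr ⟨P, c * x, n⟩

@[simp] theorem cmul_inl (c x : G) :
    (cmul (𝓟 := 𝓟) c (Sum.inl x)) = Sum.inl (c * x) := rfl

@[simp] theorem cmul_inr (c : G) (P : ↥𝓟) (x : G) (n : ℕ) :
    (cmul c (Sum.inr (P, x, n))) = Sum.inr (P, c * x, n) := rfl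

theorem cmul_cmul (c d : G) (v : CuspedVertex G 𝓟) : cmul c (cmul d v) = cmul (c * d) v := by
  rcases v with x | ⟨P, x, n⟩ <;> simp [mul_assoc]

theorem cmul_one (v : CuspedVertex G 𝓟) : cmul (1 : G) v = v := by
  rcases v with x | ⟨P, x, n⟩ <;> simp

theorem cmul_injective (c : G) : Function.Injective (cmul (𝓟 := 𝓟) c) := by
  intro u v h
  have h2 := congrArg (cmul c⁻¹) h
  rwa [cmul_cmul, cmul_cmul, inv_mul_cancel, cmul_one, cmul_one] at h2

theorem cuspedRel_cmul {S : Set G} (c : G) (u v : CuspedVertex G 𝓟) :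
    cuspedRel 𝓟 S (cmul c u) (cmul c v) ↔ cuspedRel 𝓟 S u v := by
  rcases u with x | ⟨P, x, n⟩ <;> rcases v with y | ⟨Q, y, m⟩ <;>
    simp [cuspedRel, mul_inv_rev, mul_assoc, inv_mul_cancel_left, mul_right_inj]

theorem adj_cmul {S : Set G} (c : G) (u v : CuspedVertex G 𝓟) :
    (cuspedGraph 𝓟 S).Adj (cmul c u) (cmul c v) ↔ (cuspedGraph 𝓟 S).Adj u v := by
  rw [cusped_adj_iff, cusped_adj_iff, cuspedRel_cmul, cuspedRel_cmul,
    (cmul_injective (𝓟 := 𝓟) c).ne_iff]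

/-- Left translation as a graph homomorphism. -/
def cmulHom (S : Set G) (c : G) : cuspedGraph 𝓟 S →g cuspedGraph 𝓟 S where
  toFun := cmul c
  map_rel' := fun h => (adj_cmul c _ _).mpr h

theorem dist_cmul_le {S : Set G} (c : G) (u v : CuspedVertex G 𝓟)
    (h : (cuspedGraph 𝓟 S).Reachable u v) :
    (cuspedGraph 𝓟 S).dist (cmul c u) (cmul c v) ≤ (cuspedGraph 𝓟 S).dist u v := by
  obtain ⟨w, hw⟩ := h.exists_walk_length_eq_dist
  calc (cuspedGraph 𝓟 S).dist (cmul c u) (cmul c v) ≤ (w.map (cmulHom S c)).length :=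
        SimpleGraph.dist_le _
    _ = w.length := SimpleGraph.Walk.length_map _ _
    _ = _ := hw

theorem dist_cmul {S : Set G} (hconn : (cuspedGraph 𝓟 S).Connected) (c : G)
    (u v : CuspedVertex G 𝓟) :
    (cuspedGraph 𝓟 S).dist (cmul c u) (cmul c v) = (cuspedGraph 𝓟 S).dist u v := by
  refine le_antisymm (dist_cmul_le c u v (hconn u v)) ?_
  have h := dist_cmul_le (𝓟 := 𝓟) (S := S) c⁻¹ (cmul c u) (cmul c v) (hconn _ _)
  rwa [cmul_cmul, cmul_cmul, inv_mul_cancel, cmul_one, cmul_one] at h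

/-! ### connectivity -/

theorem reachable_inl_inl {S : Set G} (hS : Subgroup.closure S = ⊤) (x : G) :
    (cuspedGraph 𝓟 S).Reachable (Sum.inl 1) (Sum.inl x) := by
  have hx0 : x ∈ Subgroup.closure S := by rw [hS]; trivial
  rw [← Subgroup.mem_toSubmonoid, Subgroup.closure_toSubmonoid] at hx0
  obtain ⟨l, hl, hp⟩ := Submonoid.exists_list_of_mem_closure hx0
  have key : ∀ l : List G, (∀ a ∈ l, a ∈ S ∪ S⁻¹) → ∀ y : G,
      (cuspedGraph 𝓟 S).Reachable (Sum.inl y) (Sum.inl (y * l.prod)) := by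
    intro l
    induction l with
    | nil =>
      intro _ y
      rw [List.prod_nil, mul_one]
    | cons a l ih =>
      intro hmem y
      have h1 : (cuspedGraph 𝓟 S).Reachable (Sum.inl y) (Sum.inl (y * a)) := by
        by_cases ha1 : a = 1
        · rw [ha1, mul_one]
        · refine SimpleGraph.Adj.reachable ?_
          rw [cusped_adj_iff]
          refine ⟨fun hEq => ha1 (left_eq_mul.mp (Sum.inl.inj hEq)), ?_⟩
          rcases hmem a List.mem_cons_self with h | h
          · exact Or.inl (show y⁻¹ * (y * a) ∈ S by simpa using h)
          · exact Or.inr (show (y * a)⁻¹ * y ∈ S by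
              simpa [mul_inv_rev, mul_assoc] using Set.mem_inv.mp h)
      have h2 := ih (fun b hb => hmem b (List.mem_cons_of_mem _ hb)) (y * a)
      rw [List.prod_cons, ← mul_assoc]
      exact h1.trans h2
  have := key l hl 1
  rw [one_mul, hp] at this
  exact this

theorem reachable_inr {S : Set G} (P : ↥𝓟) (x : G) (n : ℕ) :
    (cuspedGraph 𝓟 S).Reachable (Sum.inr (P, x, n)) (Sum.inl x) := by
  induction n with
  | zero =>
    refine SimpleGraph.Adj.reachable ?_
    rw [cusped_adj_iff]
    exact ⟨by simp, Or.inl ⟨rfl, rfl⟩⟩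
  | succ n ih =>
    refine (SimpleGraph.Adj.reachable ?_).trans ih
    rw [cusped_adj_iff]
    exact ⟨by simp, Or.inr ⟨rfl, Or.inl ⟨rfl, rfl⟩⟩⟩

theorem cusped_connected {S : Set G} (hS : Subgroup.closure S = ⊤) :
    (cuspedGraph 𝓟 S).Connected := by
  rw [SimpleGraph.connected_iff]
  refine ⟨fun u v => ?_, ⟨Sum.inl 1⟩⟩
  have h : ∀ w : CuspedVertex G 𝓟, (cuspedGraph 𝓟 S).Reachable (Sum.inl 1) w := by
    rintro (x | ⟨P, x, n⟩)
    · exact reachable_inl_inl hS x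
    · exact (reachable_inl_inl hS x).trans (reachable_inr P x n).symm
  exact (h u).symm.trans (h v)

/-! ### local finiteness and finiteness of balls -/

theorem cusped_locallyFinite (h𝓟 : 𝓟.Finite) (S : Finset G) (v : CuspedVertex G 𝓟) :
    {u | (cuspedGraph 𝓟 (S : Set G)).Adj v u}.Finite := by
  have hfin𝓟 : Finite ↥𝓟 := h𝓟
  have hSfin : (S : Set G).Finite := S.finite_toSet
  rcases v with x | ⟨P, x, n⟩
  · refine Set.Finite.subset
      (((hSfin.union hSfin.inv).image (fun s => (Sum.inl (x * s) : CuspedVertex G 𝓟))).union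
        (Set.finite_range (fun P : ↥𝓟 => (Sum.inr (P, x, 0) : CuspedVertex G 𝓟)))) ?_
    rintro (y | ⟨Q, y, m⟩) hu <;>
      rw [Set.mem_setOf_eq, cusped_adj_iff] at hu <;> obtain ⟨hne, h | h⟩ := hu
    · exact Or.inl ⟨x⁻¹ * y, Or.inl h, by simp⟩
    · exact Or.inl ⟨(y⁻¹ * x)⁻¹, Or.inr (by simpa [cuspedRel] using h), by
        simp [mul_inv_rev, mul_assoc]⟩
    · obtain ⟨rfl, rfl⟩ := h
      exact Or.inr ⟨Q, rfl⟩
    · obtain ⟨rfl, rfl⟩ := h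
      exact Or.inr ⟨Q, rfl⟩
  · have hW : (wordBall ((S : Set G) ∩ ((P : Subgroup G) : Set G)) (2 ^ (n + 1))).Finite :=
      wordBall_finite (hSfin.inter_of_left _) _
    refine Set.Finite.subset
      ((((Set.finite_singleton (Sum.inl x : CuspedVertex G 𝓟)).union
          (Set.finite_singleton (Sum.inr (P, x, n + 1) : CuspedVertex G 𝓟))).union
          (Set.finite_singleton (Sum.inr (P, x, n - 1) : CuspedVertex G 𝓟))).union
        (((hW.union hW.inv).image (fun h => (Sum.inr (P, x * h, n) : CuspedVertex G 𝓟))))) ?_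
    rintro (y | ⟨Q, y, m⟩) hu <;>
      rw [Set.mem_setOf_eq, cusped_adj_iff] at hu <;> obtain ⟨hne, h | h⟩ := hu
    · obtain ⟨rfl, rfl⟩ := h
      exact Or.inl (Or.inl (Or.inl rfl))
    · obtain ⟨rfl, rfl⟩ := h
      exact Or.inl (Or.inl (Or.inl rfl))
    · obtain ⟨rfl, h⟩ := h
      rcases h with ⟨rfl, rfl⟩ | ⟨rfl, hw⟩
      · exact Or.inl (Or.inl (Or.inr rfl))
      · exact Or.inr ⟨x⁻¹ * y, Or.inl hw, by simp⟩
    · obtain ⟨rfl, h⟩ := h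
      rcases h with ⟨rfl, hnm⟩ | ⟨rfl, hw⟩
      · refine Or.inl (Or.inr ?_)
        rw [Set.mem_singleton_iff, hnm]
        simp
      · exact Or.inr ⟨(y⁻¹ * x)⁻¹, Or.inr (by simpa using hw), by
          simp [mul_inv_rev, mul_assoc]⟩

theorem walkBall_finite {V : Type u} (X : SimpleGraph V) (o : V)
    (hloc : ∀ v, {u | X.Adj v u}.Finite) (k : ℕ) :
    {v | ∃ w : X.Walk v o, w.length ≤ k}.Finite := by
  induction k with
  | zero =>
    refine (Set.finite_singleton o).subset ?_
    rintro v ⟨w, hw⟩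
    rw [Set.mem_singleton_iff]
    exact w.eq_of_length_eq_zero (Nat.le_zero.mp hw)
  | succ k ih =>
    refine (ih.union (ih.biUnion fun u _ => hloc u)).subset ?_
    rintro v ⟨w, hw⟩
    cases w with
    | nil => exact Or.inl ⟨SimpleGraph.Walk.nil, Nat.zero_le _⟩
    | cons h w' =>
      right
      refine Set.mem_biUnion (⟨w', ?_⟩ : _ ∈ {v | ∃ w : X.Walk v o, w.length ≤ k}) h.symm
      simpa using hw

/-! ### horoballs separate -/

/-- The horoball over the coset `P` of `P`. -/
def horoSet (P : ↥𝓟) : Set (CuspedVertex G 𝓟) :=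
  {v | ∃ x k, v = Sum.inr (P, x, k) ∧ x ∈ (P : Subgroup G)}

theorem adj_horoSet {S : Set G} {P : ↥𝓟} {u v : CuspedVertex G 𝓟}
    (h : (cuspedGraph 𝓟 S).Adj u v) (hu : u ∈ horoSet P) :
    v ∈ horoSet P ∨ ∃ z, v = Sum.inl z := by
  obtain ⟨x, k, rfl, hx⟩ := hu
  rw [cusped_adj_iff] at h
  obtain ⟨-, h | h⟩ := h
  · rcases v with y | ⟨Q, y, m⟩
    · exact Or.inr ⟨y, rfl⟩
    · left
      obtain ⟨hPQ, h⟩ := h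
      subst hPQ
      rcases h with ⟨rfl, rfl⟩ | ⟨rfl, hw⟩
      · exact ⟨x, k + 1, rfl, hx⟩
      · have h2 : x⁻¹ * y ∈ (P : Subgroup G) :=
          wordBall_subset Set.inter_subset_right hw
        have h3 : y ∈ (P : Subgroup G) := by
          have := mul_mem hx h2
          simpa using this
        exact ⟨y, k, rfl, h3⟩
  · rcases v with y | ⟨Q, y, m⟩
    · exact Or.inr ⟨y, rfl⟩
    · left
      obtain ⟨hQP, h⟩ := h
      subst hQP
      rcases h with ⟨hyx, hk⟩ | ⟨hmk, hw⟩
      · subst hyx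
        exact ⟨_, m, rfl, hx⟩
      · have h2 : y⁻¹ * x ∈ (Q : Subgroup G) :=
          wordBall_subset Set.inter_subset_right hw
        have h3 : y ∈ (Q : Subgroup G) := by
          have := mul_mem hx (inv_mem h2)
          simpa [mul_inv_rev, mul_assoc] using this
        exact ⟨y, m, rfl, h3⟩

theorem exists_inl_on_walk {S : Set G} {P : ↥𝓟} {u v : CuspedVertex G 𝓟}
    (w : (cuspedGraph 𝓟 S).Walk u v)
    (hu : u ∈ horoSet P) (hv : v ∉ horoSet P) : ∃ z : G, Sum.inl z ∈ w.support := by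
  induction w with
  | nil => exact absurd hu hv
  | @cons a b c h p ih =>
    by_cases hmid : b ∈ horoSet P
    · obtain ⟨z, hz⟩ := ih hmid hv
      exact ⟨z, by rw [SimpleGraph.Walk.support_cons]; exact List.mem_cons_of_mem _ hz⟩
    · rcases adj_horoSet h hu with hmem | ⟨z, hzb⟩
      · exact absurd hmem hmid
      · refine ⟨z, ?_⟩
        rw [SimpleGraph.Walk.support_cons]
        exact List.mem_cons_of_mem _ (hzb ▸ p.start_mem_support)

/-! ### metric lemmas -/

theorem dist_add_dist_of_mem_support {V : Type u} {X : SimpleGraph V} (hconn : X.Connected)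
    {A B p : V} (w : X.Walk A B) (hlen : w.length = X.dist A B) (hp : p ∈ w.support) :
    X.dist A p + X.dist p B = X.dist A B := by
  classical
  have h1 : X.dist A p ≤ (w.takeUntil p hp).length := SimpleGraph.dist_le _
  have h2 : X.dist p B ≤ (w.dropUntil p hp).length := SimpleGraph.dist_le _
  have h3 : (w.takeUntil p hp).length + (w.dropUntil p hp).length = w.length := by
    rw [← SimpleGraph.Walk.length_append, SimpleGraph.Walk.take_spec]
  have h4 := hconn.dist_triangle (u := A) (v := p) (w := B)
  omega

theorem key_estimate {V : Type u} {X : SimpleGraph V} (hconn : X.Connected) {δ : ℝ}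
    (h4 : ∀ x y z w : V,
      min (gromovProd X x z w) (gromovProd X z y w) - δ ≤ gromovProd X x y w)
    {A B p A' B' p' : V}
    (hbetween : X.dist A p + X.dist p B = X.dist A B)
    (hA : X.dist A A' ≤ 1) (hB : X.dist B B' ≤ 1)
    (e1 : X.dist A' p' = X.dist A p) (e2 : X.dist B' p' = X.dist p B)
    (e3 : X.dist A' B' = X.dist A B) :
    (X.dist p p' : ℝ) ≤ 2 * δ + 3 := by
  have rc : ∀ x y : V, (X.dist x y : ℝ) = X.dist y x := fun x y => by
    rw [SimpleGraph.dist_comm]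
  have rt : ∀ x y z : V, (X.dist x z : ℝ) ≤ X.dist x y + X.dist y z := fun x y z => by
    exact_mod_cast hconn.dist_triangle
  have rb : (X.dist A p : ℝ) + X.dist p B = X.dist A B := by exact_mod_cast hbetween
  have rA : (X.dist A A' : ℝ) ≤ 1 := by exact_mod_cast hA
  have rB : (X.dist B B' : ℝ) ≤ 1 := by exact_mod_cast hB
  have re1 : (X.dist A' p' : ℝ) = X.dist A p := by exact_mod_cast congrArg Nat.cast e1
  have re2 : (X.dist B' p' : ℝ) = X.dist p B := by exact_mod_cast congrArg Nat.cast e2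
  have re3 : (X.dist A' B' : ℝ) = X.dist A B := by exact_mod_cast congrArg Nat.cast e3
  have hg1 : ((X.dist p p' : ℝ) - 1) / 2 ≤ gromovProd X A' p' p := by
    have h1 := rt A A' p
    have h2 := rc p' p
    unfold gromovProd
    linarith
  have hg2 : ((X.dist p p' : ℝ) - 1) / 2 ≤ gromovProd X p' B' p := by
    have h1 := rt B B' p
    have h2 := rc p' p
    have h3 := rc p' B'
    have h4' := rc B p
    unfold gromovProd
    linarith
  have hg3 : gromovProd X A' B' p ≤ 1 := by
    have h1 := rt A' A p
    have h2 := rt B' B p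
    have h3 := rc A' A
    have h4' := rc B' B
    have h5 := rc B p
    unfold gromovProd
    linarith
  have h := h4 A' B' p' p
  have hmin := le_min hg1 hg2
  linarith

/-- Adjacent (or equal) horoball points at equal depth. -/
theorem dist_horoball_pts {S : Set G} (P : ↥𝓟) (x y : G) (n : ℕ)
    (h : x⁻¹ * y ∈ wordBall (S ∩ ((P : Subgroup G) : Set G)) (2 ^ (n + 1))) :
    (cuspedGraph 𝓟 S).dist (Sum.inr (P, x, n)) (Sum.inr (P, y, n)) ≤ 1 := by
  by_cases hxy : x = y
  · subst hxy
    simp [SimpleGraph.dist_self]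
  · refine (SimpleGraph.dist_eq_one_iff_adj.mpr ?_).le
    rw [cusped_adj_iff]
    exact ⟨by simp [hxy], Or.inl ⟨rfl, Or.inr ⟨rfl, h⟩⟩⟩

end RelHypDehn

end AuxMalnormal

open RelHypDehn in
/-- **Lemma 2.14** ([GM, Lemma 3.3]).  If `(G, 𝓟)` is a relatively hyperbolic
group pair, then `𝓟` is `C`-almost malnormal for some constant `C`. -/
theorem peripheral_collection_almost_malnormal
    {G : Type u} [Group G] (𝓟 : Set (Subgroup G))
    (hRH : IsRelHyp G 𝓟) :
    ∃ C : ℕ, AlmostMalnormal 𝓟 C := by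
  classical
  obtain ⟨h𝓟fin, -, S, hAd, δ, hδ, h4⟩ := hRH
  have hconn : (cuspedGraph 𝓟 (S : Set G)).Connected := cusped_connected hAd.1
  have hBfin : {v : CuspedVertex G 𝓟 |
      ∃ w : (cuspedGraph 𝓟 (S : Set G)).Walk v (Sum.inl 1),
        w.length ≤ ⌈2 * δ + 3⌉₊}.Finite :=
    walkBall_finite _ _ (cusped_locallyFinite h𝓟fin S) _
  refine ⟨hBfin.toFinset.card, ?_⟩
  rintro P₁ h₁ P₂ h₂ g ⟨t, ht, htc⟩
  by_contra hcon
  -- membership facts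
  have hmem : ∀ a ∈ t, a ∈ P₁ ∧ g⁻¹ * a * g ∈ P₂ := by
    intro a ha
    have h' := ht (Finset.mem_coe.mpr ha)
    rw [SetLike.mem_coe, Subgroup.mem_inf] at h'
    refine ⟨h'.1, ?_⟩
    obtain ⟨x, hx, hxa⟩ := Subgroup.mem_map.mp h'.2
    have hxa' : g * x * g⁻¹ = a := by simpa [MulAut.conj_apply] using hxa
    have : g⁻¹ * a * g = x := by rw [← hxa']; group
    rw [this]; exact hx
  have htne : t.Nonempty := Finset.card_pos.mp (lt_of_le_of_lt (Nat.zero_le _) htc)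
  obtain ⟨a₀, ha₀⟩ := htne
  have hcmem : ∀ a ∈ t, a * a₀⁻¹ ∈ P₁ ∧ g⁻¹ * (a * a₀⁻¹) * g ∈ P₂ := by
    intro a ha
    refine ⟨mul_mem (hmem a ha).1 (inv_mem (hmem a₀ ha₀).1), ?_⟩
    have h1 := (hmem a ha).2
    have h2 := (hmem a₀ ha₀).2
    have hrw : g⁻¹ * (a * a₀⁻¹) * g = (g⁻¹ * a * g) * (g⁻¹ * a₀ * g)⁻¹ := by group
    rw [hrw]; exact mul_mem h1 (inv_mem h2)
  have hexm : ∀ a ∈ t, ∃ m : ℕ,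
      a * a₀⁻¹ ∈ wordBall ((S : Set G) ∩ (P₁ : Set G)) (2 ^ (m + 1)) ∧
      g⁻¹ * (a * a₀⁻¹) * g ∈ wordBall ((S : Set G) ∩ (P₂ : Set G)) (2 ^ (m + 1)) := by
    intro a ha
    obtain ⟨k1, hk1⟩ := exists_wordBall_of_mem_closure
      (show a * a₀⁻¹ ∈ Subgroup.closure ((S : Set G) ∩ (P₁ : Set G)) by
        rw [hAd.2 P₁ h₁]; exact (hcmem a ha).1)
    obtain ⟨k2, hk2⟩ := exists_wordBall_of_mem_closure
      (show g⁻¹ * (a * a₀⁻¹) * g ∈ Subgroup.closure ((S : Set G) ∩ (P₂ : Set G)) by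
        rw [hAd.2 P₂ h₂]; exact (hcmem a ha).2)
    have hle : ∀ j : ℕ, j ≤ max k1 k2 → j ≤ 2 ^ (max k1 k2 + 1) := by
      intro j hj
      calc j ≤ max k1 k2 := hj
        _ ≤ 2 ^ (max k1 k2) := Nat.lt_two_pow_self.le
        _ ≤ 2 ^ (max k1 k2 + 1) := Nat.pow_le_pow_right (by norm_num) (Nat.le_succ _)
    exact ⟨max k1 k2, wordBall_mono (hle k1 (le_max_left _ _)) hk1,
      wordBall_mono (hle k2 (le_max_right _ _)) hk2⟩
  choose m hm1 hm2 using hexm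
  let n : ℕ := t.attach.sup (fun a => m a.1 a.2)
  have hmn : ∀ (a : G) (ha : a ∈ t), 2 ^ (m a ha + 1) ≤ 2 ^ (n + 1) := fun a ha =>
    Nat.pow_le_pow_right (by norm_num)
      (Nat.succ_le_succ (Finset.le_sup (f := fun a : {x // x ∈ t} => m a.1 a.2)
        (Finset.mem_attach _ ⟨a, ha⟩)))
  -- the two deep horoball points
  have hA : (Sum.inr (⟨P₁, h₁⟩, (1 : G), n) : CuspedVertex G 𝓟) ∈ horoSet ⟨P₁, h₁⟩ :=
    ⟨1, n, rfl, one_mem _⟩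
  have hB : (Sum.inr (⟨P₂, h₂⟩, g, n) : CuspedVertex G 𝓟) ∉ horoSet ⟨P₁, h₁⟩ := by
    rintro ⟨x, k, hEq, hx⟩
    have h5 := Sum.inr.inj hEq
    have hPP : (⟨P₂, h₂⟩ : ↥𝓟) = ⟨P₁, h₁⟩ := congrArg Prod.fst h5
    have hgx : g = x := congrArg (fun p => p.2.1) h5
    have hP21 : P₂ = P₁ := congrArg Subtype.val hPP
    exact hcon ⟨hP21.symm, by rw [hgx]; exact hx⟩
  obtain ⟨w, hw⟩ := hconn.exists_walk_length_eq_dist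
    (Sum.inr (⟨P₁, h₁⟩, (1 : G), n)) (Sum.inr (⟨P₂, h₂⟩, g, n))
  obtain ⟨u, hu⟩ := exists_inl_on_walk w hA hB
  have hbetween : (cuspedGraph 𝓟 (S : Set G)).dist (Sum.inr (⟨P₁, h₁⟩, (1 : G), n))
        (Sum.inl u) +
      (cuspedGraph 𝓟 (S : Set G)).dist (Sum.inl u) (Sum.inr (⟨P₂, h₂⟩, g, n)) =
      (cuspedGraph 𝓟 (S : Set G)).dist (Sum.inr (⟨P₁, h₁⟩, (1 : G), n))
        (Sum.inr (⟨P₂, h₂⟩, g, n)) :=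
    dist_add_dist_of_mem_support hconn w hw hu
  -- each quotient of elements of t moves the crossing point a bounded amount
  have hq : ∀ a ∈ t, (Sum.inl (u⁻¹ * (a * a₀⁻¹ * u)) : CuspedVertex G 𝓟) ∈
      {v : CuspedVertex G 𝓟 |
        ∃ w : (cuspedGraph 𝓟 (S : Set G)).Walk v (Sum.inl 1),
          w.length ≤ ⌈2 * δ + 3⌉₊} := by
    intro a ha
    have hdA : (cuspedGraph 𝓟 (S : Set G)).dist (Sum.inr (⟨P₁, h₁⟩, (1 : G), n))
        (cmul (a * a₀⁻¹) (Sum.inr (⟨P₁, h₁⟩, (1 : G), n))) ≤ 1 := by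
      rw [cmul_inr]
      refine dist_horoball_pts _ _ _ _ ?_
      simpa using wordBall_mono (hmn a ha) (hm1 a ha)
    have hdB : (cuspedGraph 𝓟 (S : Set G)).dist (Sum.inr (⟨P₂, h₂⟩, g, n))
        (cmul (a * a₀⁻¹) (Sum.inr (⟨P₂, h₂⟩, g, n))) ≤ 1 := by
      rw [cmul_inr]
      refine dist_horoball_pts _ _ _ _ ?_
      have := wordBall_mono (hmn a ha) (hm2 a ha)
      simpa [mul_assoc] using this
    have e1 := dist_cmul hconn (a * a₀⁻¹) (Sum.inr (⟨P₁, h₁⟩, (1 : G), n)) (Sum.inl u)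
    have e2' := dist_cmul hconn (a * a₀⁻¹) (Sum.inr (⟨P₂, h₂⟩, g, n)) (Sum.inl u)
    have e2 : (cuspedGraph 𝓟 (S : Set G)).dist
        (cmul (a * a₀⁻¹) (Sum.inr (⟨P₂, h₂⟩, g, n))) (cmul (a * a₀⁻¹) (Sum.inl u)) =
        (cuspedGraph 𝓟 (S : Set G)).dist (Sum.inl u) (Sum.inr (⟨P₂, h₂⟩, g, n)) := by
      rw [e2', SimpleGraph.dist_comm]
    have e3 := dist_cmul hconn (a * a₀⁻¹) (Sum.inr (⟨P₁, h₁⟩, (1 : G), n))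
      (Sum.inr (⟨P₂, h₂⟩, g, n))
    have hest := key_estimate hconn h4 hbetween hdA hdB e1 e2 e3
    have hK' : (cuspedGraph 𝓟 (S : Set G)).dist (Sum.inl u)
        (cmul (a * a₀⁻¹) (Sum.inl u)) ≤ ⌈2 * δ + 3⌉₊ := by
      have h2 : ((cuspedGraph 𝓟 (S : Set G)).dist (Sum.inl u)
          (cmul (a * a₀⁻¹) (Sum.inl u)) : ℝ) ≤ (⌈2 * δ + 3⌉₊ : ℝ) :=
        le_trans hest (Nat.le_ceil _)
      exact_mod_cast h2
    have h5 := dist_cmul (𝓟 := 𝓟) hconn u⁻¹ (Sum.inl u) (cmul (a * a₀⁻¹) (Sum.inl u))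
    rw [cmul_inl, cmul_inl, cmul_inl, inv_mul_cancel] at h5
    rw [cmul_inl] at hK'
    rw [← h5] at hK'
    obtain ⟨wq, hwq⟩ := (hconn (Sum.inl (u⁻¹ * (a * a₀⁻¹ * u))) (Sum.inl 1)).exists_walk_length_eq_dist
    exact ⟨wq, by rw [hwq, SimpleGraph.dist_comm]; exact hK'⟩
  have hinj : Set.InjOn
      (fun a => (Sum.inl (u⁻¹ * (a * a₀⁻¹ * u)) : CuspedVertex G 𝓟)) ↑t := by
    intro a _ b _ hEq
    simp only [Sum.inl.injEq] at hEq
    have h1 : a * a₀⁻¹ * u = b * a₀⁻¹ * u := mul_left_cancel hEq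
    have h2 : a * a₀⁻¹ = b * a₀⁻¹ := mul_right_cancel h1
    exact mul_right_cancel h2
  have hcard : t.card ≤ hBfin.toFinset.card := by
    refine Finset.card_le_card_of_injOn _ (fun a ha => ?_) hinj
    rw [Finset.mem_coe, Set.Finite.mem_toFinset]
    exact hq a ha
  omega
end

section
/- If (G, 𝒫) is relatively hyperbolic, then C(G, 𝒫) < ∞; that is, there is a finite uniform bound on the cardinalities of all subgroups of G that are either finite non-parabolic or contained in the intersection of two distinct maximal parabolic subgroups. -/
/-
Common definitions for formalizing "Connectedness of Bowditch Boundary of Dehn Fillings"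
(Dasgupta).  We set up: Gromov hyperbolic graphs (four--point condition on the graph
metric), the Groves--Manning combinatorial cusped space, relative hyperbolicity of a
group pair, the Gromov (Bowditch) boundary of the cusped space, parabolic / two-ended /
elementary subgroups, actions on simplicial trees and splittings (relative to a
peripheral collection), acylindricity, peripheral splittings, the constant C(G,𝓟),
almost malnormality, ends of groups, Dehn fillings and "sufficiently long" fillings,
and actions on ℝ-trees.
-/

open scoped Pointwise

universe u

/-! ### Auxiliary development for the proof of `CGP_finite` -/

noncomputable section CGPAux

namespace CGPAux

open RelHypDehn

variable {G : Type u} [Group G]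

/-! #### Word balls -/

theorem wordBall_mono {T T' : Set G} {k k' : ℕ} (hT : T ⊆ T') (hk : k ≤ k') :
    wordBall T k ⊆ wordBall T' k' := by
  rintro g ⟨l, hl, he, rfl⟩
  exact ⟨l, hl.trans hk, fun a ha => (he a ha).imp (fun h => hT h) (fun h => hT h), rfl⟩

theorem wordBall_finite {T : Set G} (hT : T.Finite) (k : ℕ) : (wordBall T k).Finite := by
  induction k with
  | zero =>
    refine (Set.finite_singleton (1 : G)).subset ?_
    rintro g ⟨l, hl, -, rfl⟩
    match l with
    | [] => simp
    | a :: l' => simp at hl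
  | succ k ih =>
    refine (Set.Finite.union (Set.finite_singleton (1 : G))
      (((hT.union hT.inv).biUnion (fun a _ => ih.image (a * ·))))).subset ?_
    rintro g ⟨l, hl, he, rfl⟩
    match l with
    | [] => simp
    | a :: l' =>
      right
      have ha : a ∈ T ∪ T⁻¹ := by
        rcases he a (by simp) with h | h
        · exact Or.inl h
        · exact Or.inr (Set.mem_inv.mpr (by simpa using h))
      exact Set.mem_biUnion ha
        ⟨l'.prod, ⟨l', by simpa using hl, fun b hb => he b (by simp [hb]), rfl⟩, by simp⟩

theorem wordBall_subset_closure {T : Set G} {k : ℕ} :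
    wordBall T k ⊆ (Subgroup.closure T : Set G) := by
  rintro g ⟨l, -, he, rfl⟩
  refine list_prod_mem (fun a ha => ?_)
  rcases he a ha with h | h
  · exact Subgroup.subset_closure h
  · simpa using (Subgroup.closure T).inv_mem (Subgroup.subset_closure h)

theorem exists_wordBall_of_mem_closure {T : Set G} {g : G} (h : g ∈ Subgroup.closure T) :
    ∃ k, g ∈ wordBall T k := by
  have h' : g ∈ Submonoid.closure (T ∪ T⁻¹) := by
    rw [← Subgroup.closure_toSubmonoid] at *
    exact h
  obtain ⟨l, hl, rfl⟩ := Submonoid.exists_list_of_mem_closure h'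
  refine ⟨l.length, l, le_rfl, fun a ha => ?_, rfl⟩
  rcases hl a ha with h | h
  · exact Or.inl h
  · exact Or.inr (Set.mem_inv.mp h)

/-! #### The action of `G` on the cusped space -/

variable {𝓟 : Set (Subgroup G)} {S : Finset G}

theorem cuspedGraph_adj {s : Set G} {u v : CuspedVertex G 𝓟} :
    (cuspedGraph 𝓟 s).Adj u v ↔ u ≠ v ∧ (cuspedRel 𝓟 s u v ∨ cuspedRel 𝓟 s v u) :=
  SimpleGraph.fromRel_adj _ _ _

/-- Left multiplication action on the vertices of the cusped space. -/
def act (g : G) : CuspedVertex G 𝓟 → CuspedVertex G 𝓟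
  | .inl x => .inl (g * x)
  | .inr ⟨P, x, n⟩ => .inr ⟨P, g * x, n⟩

theorem act_act (g h : G) (v : CuspedVertex G 𝓟) : act g (act h v) = act (g * h) v := by
  rcases v with x | ⟨P, x, n⟩ <;> simp [act, mul_assoc]

theorem act_one (v : CuspedVertex G 𝓟) : act 1 v = v := by
  rcases v with x | ⟨P, x, n⟩ <;> simp [act]

theorem act_injective (g : G) : Function.Injective (act (𝓟 := 𝓟) g) := by
  intro u v huv
  have := congrArg (act g⁻¹) huv
  rwa [act_act, act_act, inv_mul_cancel, act_one, act_one] at this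

theorem cuspedRel_act {g : G} {u v : CuspedVertex G 𝓟} (h : cuspedRel 𝓟 (S : Set G) u v) :
    cuspedRel 𝓟 (S : Set G) (act g u) (act g v) := by
  rcases u with x | ⟨P, x, n⟩ <;> rcases v with y | ⟨Q, y, m⟩ <;>
    simp only [cuspedRel, act] at h ⊢
  · rwa [mul_inv_rev, mul_assoc, inv_mul_cancel_left]
  · exact ⟨by rw [h.1], h.2⟩
  · exact ⟨by rw [h.1], h.2⟩
  · refine ⟨h.1, h.2.imp (fun hh => ⟨by rw [hh.1], hh.2⟩) (fun hh => ⟨hh.1, ?_⟩)⟩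
    rw [mul_inv_rev, mul_assoc, inv_mul_cancel_left]
    exact hh.2

theorem adj_act {g : G} {u v : CuspedVertex G 𝓟} :
    (cuspedGraph 𝓟 (S : Set G)).Adj (act g u) (act g v) ↔
      (cuspedGraph 𝓟 (S : Set G)).Adj u v := by
  constructor
  · intro h
    rw [cuspedGraph_adj] at h ⊢
    refine ⟨fun hh => h.1 (by rw [hh]), ?_⟩
    rcases h.2 with h2 | h2
    · have := cuspedRel_act (g := g⁻¹) h2
      rw [act_act, act_act, inv_mul_cancel, act_one, act_one] at this
      exact Or.inl this
    · have := cuspedRel_act (g := g⁻¹) h2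
      rw [act_act, act_act, inv_mul_cancel, act_one, act_one] at this
      exact Or.inr this
  · intro h
    rw [cuspedGraph_adj] at h ⊢
    exact ⟨fun hh => h.1 (act_injective g hh),
      h.2.imp (fun h2 => cuspedRel_act h2) (fun h2 => cuspedRel_act h2)⟩

/-- The graph homomorphism given by `act g`. -/
def actHom (g : G) : cuspedGraph 𝓟 (S : Set G) →g cuspedGraph 𝓟 (S : Set G) where
  toFun := act g
  map_rel' := fun h => adj_act.mpr h

theorem reachable_act {g : G} {u v : CuspedVertex G 𝓟}
    (h : (cuspedGraph 𝓟 (S : Set G)).Reachable u v) :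
    (cuspedGraph 𝓟 (S : Set G)).Reachable (act g u) (act g v) := by
  obtain ⟨p⟩ := h
  exact ⟨p.map (actHom g)⟩

theorem dist_act (g : G) (u v : CuspedVertex G 𝓟) :
    (cuspedGraph 𝓟 (S : Set G)).dist (act g u) (act g v) =
      (cuspedGraph 𝓟 (S : Set G)).dist u v := by
  have key : ∀ (g : G) (u v : CuspedVertex G 𝓟),
      (cuspedGraph 𝓟 (S : Set G)).dist (act g u) (act g v) ≤
        (cuspedGraph 𝓟 (S : Set G)).dist u v := by
    intro g u v
    by_cases h : (cuspedGraph 𝓟 (S : Set G)).Reachable u v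
    · obtain ⟨p, hp⟩ := h.exists_walk_length_eq_dist
      calc (cuspedGraph 𝓟 (S : Set G)).dist (act g u) (act g v)
          ≤ (p.map (actHom g)).length := SimpleGraph.dist_le _
        _ = (cuspedGraph 𝓟 (S : Set G)).dist u v := by
            rw [SimpleGraph.Walk.length_map, hp]
    · rw [SimpleGraph.dist_eq_zero_of_not_reachable h,
        SimpleGraph.dist_eq_zero_of_not_reachable]
      intro hr
      exact h (by simpa [act_act, act_one] using reachable_act (g := g⁻¹) hr)
  refine le_antisymm (key g u v) ?_
  have := key g⁻¹ (act g u) (act g v)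
  simpa [act_act, act_one] using this

/-! #### Connectivity of the cusped space -/

theorem reachable_inl_mul (c : G) (l : List G)
    (hl : ∀ a ∈ l, a ∈ (S : Set G) ∨ a⁻¹ ∈ (S : Set G)) :
    (cuspedGraph 𝓟 (S : Set G)).Reachable (Sum.inl c) (Sum.inl (c * l.prod)) := by
  induction l generalizing c with
  | nil => simpa using SimpleGraph.Reachable.refl _
  | cons a l ih =>
    have step : (cuspedGraph 𝓟 (S : Set G)).Reachable (Sum.inl c) (Sum.inl (c * a)) := by
      by_cases hc : c = c * a
      · rw [← hc]
      · refine (SimpleGraph.Adj.reachable ?_)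
        rw [cuspedGraph_adj]
        refine ⟨by simpa using hc, ?_⟩
        rcases hl a (by simp) with h | h
        · exact Or.inl (by simpa [cuspedRel] using h)
        · exact Or.inr (by simp only [cuspedRel]; simpa [mul_inv_rev] using h)
    have := ih (c * a) (fun b hb => hl b (by simp [hb]))
    rw [List.prod_cons, ← mul_assoc]
    exact step.trans this

theorem reachable_inr_down (P : 𝓟) (x : G) (n : ℕ) :
    (cuspedGraph 𝓟 (S : Set G)).Reachable (Sum.inr (P, x, n)) (Sum.inl x) := by
  induction n with
  | zero =>
    refine SimpleGraph.Adj.reachable ?_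
    rw [cuspedGraph_adj]
    exact ⟨by simp, Or.inl ⟨rfl, rfl⟩⟩
  | succ n ih =>
    refine SimpleGraph.Reachable.trans (SimpleGraph.Adj.reachable ?_) ih
    rw [cuspedGraph_adj]
    exact ⟨by simp, Or.inr ⟨rfl, Or.inl ⟨rfl, rfl⟩⟩⟩

theorem cusped_connected (hS : Subgroup.closure (S : Set G) = ⊤) :
    (cuspedGraph 𝓟 (S : Set G)).Connected := by
  have hbase : ∀ v : CuspedVertex G 𝓟,
      (cuspedGraph 𝓟 (S : Set G)).Reachable (Sum.inl 1) v := by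
    intro v
    have hinl : ∀ x : G, (cuspedGraph 𝓟 (S : Set G)).Reachable (Sum.inl 1) (Sum.inl x) := by
      intro x
      have hx : x ∈ Subgroup.closure (S : Set G) := by rw [hS]; trivial
      obtain ⟨k, l, -, he, rfl⟩ := exists_wordBall_of_mem_closure hx
      simpa using reachable_inl_mul 1 l he
    rcases v with x | ⟨P, x, n⟩
    · exact hinl x
    · exact (hinl x).trans (reachable_inr_down P x n).symm
  have : Nonempty (CuspedVertex G 𝓟) := ⟨Sum.inl 1⟩
  constructor
  intro u v
  exact (hbase u).symm.trans (hbase v)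

/-! #### Depth -/

/-- The depth of a vertex of the cusped space. -/
def depth : CuspedVertex G 𝓟 → ℕ
  | .inl _ => 0
  | .inr ⟨_, _, n⟩ => n + 1

theorem depth_act (g : G) (v : CuspedVertex G 𝓟) : depth (act g v) = depth v := by
  rcases v with x | ⟨P, x, n⟩ <;> rfl

theorem depth_adj {u v : CuspedVertex G 𝓟}
    (h : (cuspedGraph 𝓟 (S : Set G)).Adj u v) : depth u ≤ depth v + 1 := by
  rw [cuspedGraph_adj] at h
  rcases u with x | ⟨P, x, n⟩ <;> rcases v with y | ⟨Q, y, m⟩ <;>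
    simp only [depth] <;> rcases h.2 with h2 | h2 <;> simp only [cuspedRel] at h2
  · omega
  · omega
  · omega
  · omega
  · omega
  · omega
  · rcases h2.2 with ⟨-, hm⟩ | ⟨hm, -⟩ <;> omega
  · rcases h2.2 with ⟨-, hm⟩ | ⟨hm, -⟩ <;> omega

theorem depth_le_walk {u v : CuspedVertex G 𝓟} (p : (cuspedGraph 𝓟 (S : Set G)).Walk u v) :
    depth u ≤ depth v + p.length := by
  induction p with
  | nil => simp
  | cons h p ih =>
    have := depth_adj (S := S) h
    simp only [SimpleGraph.Walk.length_cons]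
    omega

theorem depth_le_dist {u v : CuspedVertex G 𝓟}
    (h : (cuspedGraph 𝓟 (S : Set G)).Reachable u v) :
    depth u ≤ depth v + (cuspedGraph 𝓟 (S : Set G)).dist u v := by
  obtain ⟨p, hp⟩ := h.exists_walk_length_eq_dist
  simpa [hp] using depth_le_walk p

/-! #### Local finiteness and balls -/

theorem neighborSet_finite (hP : 𝓟.Finite) (v : CuspedVertex G 𝓟) :
    ((cuspedGraph 𝓟 (S : Set G)).neighborSet v).Finite := by
  haveI := hP.to_subtype
  rcases v with x | ⟨P, x, n⟩
  · refine ((((S.finite_toSet.union S.finite_toSet.inv).image (x * ·)).image Sum.inl).union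
      (Set.finite_range (fun P : 𝓟 => (Sum.inr (P, x, 0) : CuspedVertex G 𝓟)))).subset ?_
    intro u hu
    rw [SimpleGraph.mem_neighborSet, cuspedGraph_adj] at hu
    rcases u with y | ⟨Q, y, m⟩
    · left
      have ha : x⁻¹ * y ∈ (S : Set G) ∪ (S : Set G)⁻¹ := by
        rcases hu.2 with h2 | h2 <;> simp only [cuspedRel] at h2
        · exact Or.inl h2
        · exact Or.inr (Set.mem_inv.mpr (by simpa [mul_inv_rev] using h2))
      exact ⟨x * (x⁻¹ * y), ⟨x⁻¹ * y, ha, rfl⟩, by simp [mul_inv_cancel_left]⟩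
    · right
      have hxy : y = x ∧ m = 0 := by
        rcases hu.2 with h2 | h2 <;> simp only [cuspedRel] at h2
        · exact ⟨h2.1.symm, h2.2⟩
        · exact h2
      exact ⟨Q, by simp [hxy.1, hxy.2]⟩
  · have hW : (wordBall ((S : Set G) ∩ (P.1 : Set G)) (2 ^ (n + 1))).Finite :=
      wordBall_finite (S.finite_toSet.subset Set.inter_subset_left) _
    refine ((((Set.finite_singleton (Sum.inl x : CuspedVertex G 𝓟)).union
        (Set.finite_singleton (Sum.inr (P, x, n + 1) : CuspedVertex G 𝓟))).union
        (Set.finite_singleton (Sum.inr (P, x, n - 1) : CuspedVertex G 𝓟))).union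
        ((((hW.union hW.inv).image (x * ·)).image
          (fun y => (Sum.inr (P, y, n) : CuspedVertex G 𝓟))))).subset ?_
    intro u hu
    rw [SimpleGraph.mem_neighborSet, cuspedGraph_adj] at hu
    rcases u with y | ⟨Q, y, m⟩
    · have hxy : x = y := by
        rcases hu.2 with h2 | h2 <;> simp only [cuspedRel] at h2
        · exact h2.1
        · exact h2.1.symm
      exact Or.inl (Or.inl (Or.inl (by simp [hxy])))
    · rcases hu.2 with h2 | h2 <;> simp only [cuspedRel] at h2 <;>
        obtain ⟨hPQ, h2⟩ := h2
      · rcases h2 with ⟨hxy, hm⟩ | ⟨hnm, hw⟩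
        · exact Or.inl (Or.inl (Or.inr (by simp [hPQ, hxy, hm])))
        · refine Or.inr ⟨x * (x⁻¹ * y), ⟨x⁻¹ * y, Or.inl hw, rfl⟩, ?_⟩
          simp [hPQ, hnm, mul_inv_cancel_left]
      · rcases h2 with ⟨hxy, hm⟩ | ⟨hnm, hw⟩
        · refine Or.inl (Or.inr ?_)
          simp only [Set.mem_singleton_iff]
          rw [← hPQ, hxy, hm]
          simp
        · refine Or.inr ⟨x * (x⁻¹ * y), ⟨x⁻¹ * y, Or.inr ?_, rfl⟩, ?_⟩
          · rw [Set.mem_inv]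
            rw [hPQ, hnm] at hw
            simpa [mul_inv_rev] using hw
          · simp [hPQ, hnm, mul_inv_cancel_left]

/-- The combinatorial ball of radius `R` about `v` in the cusped space. -/
def ball (S : Finset G) (v : CuspedVertex G 𝓟) (R : ℕ) : Set (CuspedVertex G 𝓟) :=
  {u | (cuspedGraph 𝓟 (S : Set G)).dist v u ≤ R}

theorem mem_ball {v u : CuspedVertex G 𝓟} {R : ℕ} :
    u ∈ ball S v R ↔ (cuspedGraph 𝓟 (S : Set G)).dist v u ≤ R := Iff.rfl

theorem ball_finite (hS : Subgroup.closure (S : Set G) = ⊤) (hP : 𝓟.Finite)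
    (v : CuspedVertex G 𝓟) (R : ℕ) : (ball S v R).Finite := by
  have hconn := cusped_connected (𝓟 := 𝓟) hS
  induction R with
  | zero =>
    refine (Set.finite_singleton v).subset ?_
    intro u hu
    rw [mem_ball, Nat.le_zero] at hu
    simp [(hconn.dist_eq_zero_iff.mp hu).symm]
  | succ R ih =>
    refine (ih.union (ih.biUnion (fun u _ => neighborSet_finite (S := S) hP u))).subset ?_
    intro w hw
    rw [mem_ball] at hw
    by_cases hR : (cuspedGraph 𝓟 (S : Set G)).dist v w ≤ R
    · exact Or.inl hR
    · have hd : (cuspedGraph 𝓟 (S : Set G)).dist v w = R + 1 := le_antisymm hw (by omega)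
      have hvw : w ≠ v := by
        intro h
        rw [h, SimpleGraph.dist_self] at hd
        omega
      obtain ⟨p, hp⟩ := (hconn.preconnected v w).exists_walk_length_eq_dist
      obtain ⟨u', hadj, q, hq⟩ := SimpleGraph.Walk.exists_eq_cons_of_ne hvw p.reverse
      have hlen : q.length + 1 = R + 1 := by
        have hc := congrArg SimpleGraph.Walk.length hq
        simp only [SimpleGraph.Walk.length_reverse, SimpleGraph.Walk.length_cons] at hc
        omega
      refine Or.inr (Set.mem_biUnion (show u' ∈ ball S v R from ?_) hadj.symm)
      rw [mem_ball, SimpleGraph.dist_comm]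
      calc (cuspedGraph 𝓟 (S : Set G)).dist u' v ≤ q.length := SimpleGraph.dist_le q
        _ ≤ R := by omega

theorem ball_act (g : G) (v : CuspedVertex G 𝓟) (R : ℕ) :
    ball S (act g v) R = act g '' ball S v R := by
  ext u
  constructor
  · intro hu
    refine ⟨act g⁻¹ u, ?_, by rw [act_act]; simp [act_one]⟩
    rw [mem_ball] at hu ⊢
    rw [← dist_act g, act_act]
    simpa [act_one] using hu
  · rintro ⟨w, hw, rfl⟩
    rw [mem_ball] at hw ⊢
    rwa [dist_act]

theorem exists_uniform_ball_bound (hP : 𝓟.Finite) (K : ℕ) :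
    ∃ N : ℕ, ∀ v : CuspedVertex G 𝓟, depth v ≤ K → (ball S v K).ncard ≤ N := by
  haveI := hP.to_subtype
  set Reps : Set (CuspedVertex G 𝓟) :=
    insert (Sum.inl 1)
      ((fun pn : 𝓟 × ℕ => (Sum.inr (pn.1, 1, pn.2) : CuspedVertex G 𝓟)) ''
        (Set.univ ×ˢ Set.Iic K)) with hReps
  have hRepsFin : Reps.Finite :=
    ((Set.finite_univ.prod (Set.finite_Iic K)).image _).insert _
  obtain ⟨N, hN⟩ := (hRepsFin.image (fun v => (ball S v K).ncard)).bddAbove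
  refine ⟨N, fun v hv => ?_⟩
  rcases v with x | ⟨P, x, n⟩
  · have heq : ball S (Sum.inl x : CuspedVertex G 𝓟) K
        = act x '' ball S (Sum.inl 1) K := by
      rw [← ball_act]
      simp [act]
    rw [heq, Set.ncard_image_of_injective _ (act_injective x)]
    exact hN ⟨Sum.inl 1, Set.mem_insert _ _, rfl⟩
  · have hn : n ≤ K := by simp only [depth] at hv; omega
    have heq : ball S (Sum.inr (P, x, n) : CuspedVertex G 𝓟) K
        = act x '' ball S (Sum.inr (P, 1, n)) K := by
      rw [← ball_act]
      simp [act]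
    rw [heq, Set.ncard_image_of_injective _ (act_injective x)]
    exact hN ⟨Sum.inr (P, 1, n), Set.mem_insert_of_mem _ ⟨(P, n), ⟨trivial, hn⟩, rfl⟩, rfl⟩

theorem card_le_of_moves (hS : Subgroup.closure (S : Set G) = ⊤) (hP : 𝓟.Finite)
    {K N : ℕ} (hN : ∀ v : CuspedVertex G 𝓟, depth v ≤ K → (ball S v K).ncard ≤ N)
    (m : CuspedVertex G 𝓟) (hm : depth m ≤ K) (t : Finset G)
    (hmove : ∀ g ∈ t, (cuspedGraph 𝓟 (S : Set G)).dist m (act g m) ≤ K) :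
    t.card ≤ N := by
  classical
  have hfin : (ball S m K).Finite := ball_finite hS hP m K
  have hcard : t.card ≤ hfin.toFinset.card := by
    refine Finset.card_le_card_of_injOn (fun g => act g m) (fun g hg => ?_) ?_
    · rw [Finset.mem_coe, Set.Finite.mem_toFinset, mem_ball]
      exact hmove g hg
    · intro g₁ _ g₂ _ h
      simp only at h
      rcases m with x | ⟨P, x, n⟩ <;> simp only [act, Sum.inl.injEq, Sum.inr.injEq,
        Prod.mk.injEq] at h
      · exact mul_right_cancel h
      · exact mul_right_cancel h.2.1
  calc t.card ≤ hfin.toFinset.card := hcard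
    _ = (ball S m K).ncard := (Set.ncard_eq_toFinset_card _ hfin).symm
    _ ≤ N := hN m hm

/-! #### Generic metric lemmas in hyperbolic graphs -/

theorem walk_split {V : Type*} {X : SimpleGraph V} {u v : V} (p : X.Walk u v) (k : ℕ)
    (hk : k ≤ p.length) :
    ∃ (m : V) (q : X.Walk u m) (r : X.Walk m v),
      q.length = k ∧ r.length = p.length - k := by
  induction p generalizing k with
  | nil =>
    have hk0 : k = 0 := by simpa using hk
    exact ⟨_, .nil, .nil, by simp [hk0], by simp⟩
  | @cons a b c h p ih =>
    match k with
    | 0 => exact ⟨a, .nil, .cons h p, by simp, by simp⟩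
    | k + 1 =>
      obtain ⟨m, q, r, hq, hr⟩ := ih k (by simpa using hk)
      exact ⟨m, .cons h q, r, by simp [hq], by simpa using hr⟩

theorem exists_dist_split {V : Type*} {X : SimpleGraph V} (hconn : X.Connected) (u v : V)
    (k : ℕ) (hk : k ≤ X.dist u v) :
    ∃ m : V, X.dist u m = k ∧ X.dist m v = X.dist u v - k := by
  obtain ⟨p, hp⟩ := (hconn.preconnected u v).exists_walk_length_eq_dist
  obtain ⟨m, q, r, hq, hr⟩ := walk_split p k (by omega)
  have h1 : X.dist u m ≤ k := by rw [← hq]; exact SimpleGraph.dist_le q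
  have h2 : X.dist m v ≤ X.dist u v - k := by rw [← hp, ← hr]; exact SimpleGraph.dist_le r
  have h3 : X.dist u v ≤ X.dist u m + X.dist m v := hconn.dist_triangle
  exact ⟨m, by omega, by omega⟩

theorem center_diameter {V : Type*} {X : SimpleGraph V} (hconn : X.Connected) {δ : ℝ}
    (hyp : ∀ x y z w : V,
      min (gromovProd X x z w) (gromovProd X z y w) - δ ≤ gromovProd X x y w)
    (Y : Finset V) (r : ℕ) {x y : V}
    (hx : ∀ z ∈ Y, X.dist x z ≤ r) (hy : ∀ z ∈ Y, X.dist y z ≤ r)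
    (hmin : ∀ m : V, ∃ z ∈ Y, r ≤ X.dist m z) :
    (X.dist x y : ℝ) ≤ 4 * δ + 2 := by
  set d := X.dist x y with hd
  obtain ⟨m, hm1, hm2⟩ := exists_dist_split hconn x y (d / 2) (Nat.div_le_self _ _)
  obtain ⟨z, hz, hrz⟩ := hmin m
  have h4 := hyp x y z m
  have hsum : d / 2 + (d - d / 2) = d := by omega
  have hxy0 : gromovProd X x y m = 0 := by
    unfold gromovProd
    rw [SimpleGraph.dist_comm (G := X) (u := y) (v := m), hm1, hm2, ← hd]
    rw [div_eq_zero_iff]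
    left
    rw [← Nat.cast_add, hsum]
    ring
  rw [hxy0] at h4
  have hcast : (d : ℝ) ≤ 2 * ((d / 2 : ℕ) : ℝ) + 1 := by
    exact_mod_cast (by omega : d ≤ 2 * (d / 2) + 1)
  have e2 : (r : ℝ) ≤ X.dist z m := by
    rw [SimpleGraph.dist_comm (G := X) (u := z) (v := m)]
    exact_mod_cast hrz
  have hhalf : ((d / 2 : ℕ) : ℝ) ≤ 2 * δ := by
    rcases min_le_iff.mp (show min (gromovProd X x z m) (gromovProd X z y m) ≤ δ by
      linarith) with hc | hc
    · have e1 : (X.dist x m : ℝ) = ((d / 2 : ℕ) : ℝ) := by rw [hm1]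
      have e3 : (X.dist x z : ℝ) ≤ r := by exact_mod_cast hx z hz
      unfold gromovProd at hc
      linarith
    · have e1 : (X.dist y m : ℝ) = ((d - d / 2 : ℕ) : ℝ) := by rw [SimpleGraph.dist_comm (G := X) (u := y) (v := m), hm2]
      have e3 : (X.dist z y : ℝ) ≤ r := by
        rw [SimpleGraph.dist_comm (G := X) (u := z) (v := y)]
        exact_mod_cast hy z hz
      have e4 : ((d / 2 : ℕ) : ℝ) ≤ ((d - d / 2 : ℕ) : ℝ) := by
        exact_mod_cast (by omega : d / 2 ≤ d - d / 2)
      unfold gromovProd at hc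
      linarith
  linarith

theorem geodesic_displacement {V : Type*} {X : SimpleGraph V} (hconn : X.Connected) {δ : ℝ}
    (hyp : ∀ x y z w : V,
      min (gromovProd X x z w) (gromovProd X z y w) - δ ≤ gromovProd X x y w)
    {x y m x' y' m' : V}
    (hsplit : X.dist x m + X.dist m y = X.dist x y)
    (hx : X.dist x x' ≤ 1) (hy : X.dist y y' ≤ 1)
    (hxy : X.dist x' y' = X.dist x y) (hxm : X.dist x' m' = X.dist x m)
    (hmy : X.dist m' y' = X.dist m y) :
    (X.dist m m' : ℝ) ≤ 2 * δ + 3 := by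
  have h4 := hyp x' y' m' m
  have t1 : X.dist x' m ≤ X.dist x' x + X.dist x m := hconn.dist_triangle
  have t2 : X.dist y' m ≤ X.dist y' y + X.dist y m := hconn.dist_triangle
  have t3 : X.dist x m ≤ X.dist x x' + X.dist x' m := hconn.dist_triangle
  have t4 : X.dist y m ≤ X.dist y y' + X.dist y' m := hconn.dist_triangle
  have c1 : X.dist x' x = X.dist x x' := SimpleGraph.dist_comm (G := X) (u := _) (v := _)
  have c2 : X.dist y' y = X.dist y y' := SimpleGraph.dist_comm (G := X) (u := _) (v := _)
  have c3 : X.dist y m = X.dist m y := SimpleGraph.dist_comm (G := X) (u := _) (v := _)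
  have hxr := (Nat.cast_le (α := ℝ)).mpr hx
  have hyr := (Nat.cast_le (α := ℝ)).mpr hy
  have r1 : (X.dist x' m : ℝ) ≤ 1 + X.dist x m := by
    rw [c1] at t1
    have h := (Nat.cast_le (α := ℝ)).mpr t1
    push_cast at h hxr ⊢
    linarith
  have r2 : (X.dist y' m : ℝ) ≤ 1 + X.dist y m := by
    rw [c2] at t2
    have h := (Nat.cast_le (α := ℝ)).mpr t2
    push_cast at h hyr ⊢
    linarith
  have r3 : (X.dist x m : ℝ) - 1 ≤ X.dist x' m := by
    have h := (Nat.cast_le (α := ℝ)).mpr t3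
    push_cast at h hxr ⊢
    linarith
  have r4 : (X.dist y m : ℝ) - 1 ≤ X.dist y' m := by
    have h := (Nat.cast_le (α := ℝ)).mpr t4
    push_cast at h hyr ⊢
    linarith
  have hxyr : (X.dist x' y' : ℝ) = X.dist x m + X.dist y m := by
    rw [hxy, ← hsplit]
    push_cast
    rw [c3]
  have hgp : gromovProd X x' y' m ≤ 1 := by
    unfold gromovProd
    linarith
  have hmin' : min (gromovProd X x' m' m) (gromovProd X m' y' m) ≤ 1 + δ := by
    linarith
  have cmm : X.dist m' m = X.dist m m' := SimpleGraph.dist_comm (G := X) (u := _) (v := _)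
  rcases min_le_iff.mp hmin' with hc | hc
  · unfold gromovProd at hc
    rw [cmm, hxm] at hc
    linarith
  · unfold gromovProd at hc
    rw [cmm, hmy, ← c3] at hc
    linarith

/-! #### Horoballs and crossing walks -/

variable (𝓟) in
/-- Membership in the horoball over the coset `c P`. -/
def inHoro (P : 𝓟) (c : G) : CuspedVertex G 𝓟 → Prop
  | .inl _ => False
  | .inr ⟨Q, y, _⟩ => Q = P ∧ c⁻¹ * y ∈ (P : Subgroup G)

theorem inHoro_exit {P : 𝓟} {c : G} {u v : CuspedVertex G 𝓟}
    (h : (cuspedGraph 𝓟 (S : Set G)).Adj u v) (hu : inHoro 𝓟 P c u)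
    (hv : ¬ inHoro 𝓟 P c v) : ∃ z, v = Sum.inl z := by
  rcases v with z | ⟨Q', y', m⟩
  · exact ⟨z, rfl⟩
  rcases u with z | ⟨Q, y, n⟩
  · exact absurd hu (by simp [inHoro])
  obtain ⟨hQP, hcy⟩ := hu
  exfalso
  apply hv
  rw [cuspedGraph_adj] at h
  have hsub : ∀ (R : 𝓟) (k : ℕ) (a b : G), a⁻¹ * b ∈
      wordBall ((S : Set G) ∩ ((R : Subgroup G) : Set G)) (2 ^ (k + 1)) →
      a⁻¹ * b ∈ (R : Subgroup G) := by
    intro R k a b hab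
    have := wordBall_subset_closure hab
    exact (Subgroup.closure_le _).mpr Set.inter_subset_right this
  rcases h.2 with h2 | h2 <;> simp only [cuspedRel] at h2
  · obtain ⟨hQQ', h2⟩ := h2
    refine ⟨by rw [← hQQ', hQP], ?_⟩
    rcases h2 with ⟨hyy', -⟩ | ⟨-, hw⟩
    · rw [← hyy']
      exact hcy
    · have hyP : y⁻¹ * y' ∈ (P : Subgroup G) := by
        rw [hQP] at hw
        exact hsub P _ y y' hw
      have : c⁻¹ * y' = (c⁻¹ * y) * (y⁻¹ * y') := by group
      rw [this]
      exact mul_mem hcy hyP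
  · obtain ⟨hQ'Q, h2⟩ := h2
    refine ⟨by rw [hQ'Q, hQP], ?_⟩
    rcases h2 with ⟨hyy', -⟩ | ⟨-, hw⟩
    · rw [hyy']
      exact hcy
    · have hyP : y'⁻¹ * y ∈ (P : Subgroup G) := by
        rw [hQ'Q, hQP] at hw
        exact hsub P _ y' y hw
      have hyP' : y⁻¹ * y' ∈ (P : Subgroup G) := by
        have := inv_mem hyP
        simpa [mul_inv_rev] using this
      have : c⁻¹ * y' = (c⁻¹ * y) * (y⁻¹ * y') := by group
      rw [this]
      exact mul_mem hcy hyP'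

theorem cross_horoball {P : 𝓟} {c : G} {u v : CuspedVertex G 𝓟}
    (p : (cuspedGraph 𝓟 (S : Set G)).Walk u v)
    (hu : inHoro 𝓟 P c u) (hv : ¬ inHoro 𝓟 P c v) :
    ∃ (z : G) (q : (cuspedGraph 𝓟 (S : Set G)).Walk u (Sum.inl z))
      (r : (cuspedGraph 𝓟 (S : Set G)).Walk (Sum.inl z) v),
      q.length + r.length = p.length := by
  induction p with
  | nil => exact absurd hu hv
  | @cons a b c' h p ih =>
    by_cases hb : inHoro 𝓟 P c b
    · obtain ⟨z, q, r, hl⟩ := ih hb hv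
      exact ⟨z, .cons h q, r, by simp only [SimpleGraph.Walk.length_cons]; omega⟩
    · obtain ⟨z, rfl⟩ := inHoro_exit h hu hb
      exact ⟨z, .cons h .nil, p,
        by simp only [SimpleGraph.Walk.length_cons, SimpleGraph.Walk.length_nil]; omega⟩

/-! #### Conjugate subgroups -/

theorem mem_conjSubgroup {g x : G} {P : Subgroup G} :
    x ∈ conjSubgroup g P ↔ g⁻¹ * x * g ∈ P := by
  unfold conjSubgroup
  rw [Subgroup.mem_map]
  constructor
  · rintro ⟨p, hp, rfl⟩
    simpa [MulAut.conj_apply, mul_assoc] using hp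
  · intro h
    refine ⟨g⁻¹ * x * g, h, ?_⟩
    simp [MulAut.conj_apply]
    group

theorem conjSubgroup_eq_conjSubgroup {g₁ g₂ : G} {Q : Subgroup G}
    (hg : g₁⁻¹ * g₂ ∈ Q) : conjSubgroup g₁ Q = conjSubgroup g₂ Q := by
  ext x
  rw [mem_conjSubgroup, mem_conjSubgroup]
  constructor
  · intro h
    have heq : g₂⁻¹ * x * g₂ = (g₁⁻¹ * g₂)⁻¹ * (g₁⁻¹ * x * g₁) * (g₁⁻¹ * g₂) := by group
    rw [heq]
    exact mul_mem (mul_mem (inv_mem hg) h) hg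
  · intro h
    have heq : g₁⁻¹ * x * g₁ = (g₁⁻¹ * g₂) * (g₂⁻¹ * x * g₂) * (g₁⁻¹ * g₂)⁻¹ := by group
    rw [heq]
    exact mul_mem (mul_mem hg h) (inv_mem hg)

end CGPAux

end CGPAux

open RelHypDehn in
/-- **Lemma 2.16** ([GM, Lemma 4.4]).  If `(G, 𝓟)` is relatively hyperbolic then
`C(G, 𝓟) < ∞`: there is a finite uniform bound on the cardinalities of all
subgroups of `G` which are finite non-parabolic or contained in the intersection
of two distinct maximal parabolic subgroups. -/
theorem CGP_finite
    {G : Type u} [Group G] (𝓟 : Set (Subgroup G))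
    (hRH : IsRelHyp G 𝓟) :
    ∃ N : ℕ, ∀ F ∈ CFamily 𝓟, ∀ t : Finset G, (t : Set G) ⊆ (F : Set G) → t.card ≤ N := by
  classical
  obtain ⟨hPfin, -, S, hAd, δex⟩ := hRH
  obtain ⟨δ, hδ0, hδ⟩ := δex
  have hS := hAd.1
  have hconn := CGPAux.cusped_connected (𝓟 := 𝓟) hS
  set K : ℕ := ⌈4 * δ⌉₊ + 3 with hK
  have hKreal : 4 * δ + 2 ≤ (K : ℝ) := by
    have := Nat.le_ceil (4 * δ)
    rw [hK]
    push_cast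
    linarith
  have hKreal2 : 2 * δ + 3 ≤ (K : ℝ) := by
    have := Nat.le_ceil (4 * δ)
    rw [hK]
    push_cast
    linarith
  obtain ⟨N, hN⟩ := CGPAux.exists_uniform_ball_bound (S := S) hPfin K
  refine ⟨N, ?_⟩
  rintro F hF t ht
  have htF : ∀ g ∈ t, g ∈ F := fun g hg => ht hg
  rcases hF with ⟨hFfin, hFnp⟩ | ⟨M₁, M₂, hM₁, hM₂, hne, hle⟩
  · -- Branch 1: finite non-parabolic subgroups
    haveI := hFfin
    have hFset : (F : Set G).Finite := Set.toFinite _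
    set v₀ : CuspedVertex G 𝓟 := Sum.inl 1 with hv₀
    set Y : Finset (CuspedVertex G 𝓟) :=
      hFset.toFinset.image (fun g => CGPAux.act g v₀) with hY
    have hYne : Y.Nonempty := by
      refine ⟨CGPAux.act 1 v₀, Finset.mem_image.mpr ⟨1, ?_, rfl⟩⟩
      rw [Set.Finite.mem_toFinset]
      exact F.one_mem
    set ρ : CuspedVertex G 𝓟 → ℕ :=
      fun v => Y.sup (fun z => (cuspedGraph 𝓟 (S : Set G)).dist v z) with hρ
    obtain ⟨c, hc⟩ := Nat.sInf_mem (Set.range_nonempty ρ)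
    have hcz : ∀ z ∈ Y, (cuspedGraph 𝓟 (S : Set G)).dist c z ≤ ρ c := by
      intro z hz
      exact Finset.le_sup hz
    have hmin : ∀ m : CuspedVertex G 𝓟, ∃ z ∈ Y,
        ρ c ≤ (cuspedGraph 𝓟 (S : Set G)).dist m z := by
      intro m
      obtain ⟨z, hz, hsup⟩ := Finset.exists_mem_eq_sup Y hYne
        (fun z => (cuspedGraph 𝓟 (S : Set G)).dist m z)
      refine ⟨z, hz, ?_⟩
      rw [← hsup]
      rw [hc]
      exact Nat.sInf_le ⟨m, rfl⟩
    have hgz : ∀ g ∈ F, ∀ z ∈ Y,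
        (cuspedGraph 𝓟 (S : Set G)).dist (CGPAux.act g c) z ≤ ρ c := by
      intro g hg z hz
      rw [hY, Finset.mem_image] at hz
      obtain ⟨f, hf, rfl⟩ := hz
      rw [Set.Finite.mem_toFinset] at hf
      have hdd : (cuspedGraph 𝓟 (S : Set G)).dist (CGPAux.act g c) (CGPAux.act f v₀)
          = (cuspedGraph 𝓟 (S : Set G)).dist c (CGPAux.act (g⁻¹ * f) v₀) := by
        rw [← CGPAux.dist_act g⁻¹, CGPAux.act_act, CGPAux.act_act, inv_mul_cancel,
          CGPAux.act_one]
      rw [hdd]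
      refine hcz _ ?_
      rw [hY, Finset.mem_image]
      exact ⟨g⁻¹ * f, by rw [Set.Finite.mem_toFinset]; exact mul_mem (inv_mem hg) hf, rfl⟩
    have hmove : ∀ g ∈ F, (cuspedGraph 𝓟 (S : Set G)).dist c (CGPAux.act g c) ≤ K := by
      intro g hg
      have hreal := CGPAux.center_diameter hconn hδ Y (ρ c) hcz (hgz g hg) hmin
      have hble : ((cuspedGraph 𝓟 (S : Set G)).dist c (CGPAux.act g c) : ℝ) ≤ (K : ℝ) :=
        le_trans hreal hKreal
      exact_mod_cast hble
    have hdepth : CGPAux.depth c ≤ K := by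
      by_contra hdc
      push_neg at hdc
      rcases hcase : c with x | ⟨P, x, n⟩
      · rw [hcase] at hdc
        simp [CGPAux.depth] at hdc
      rw [hcase] at hdc
      simp only [CGPAux.depth] at hdc
      have hpara : ∀ g ∈ F, g ∈ conjSubgroup x (P : Subgroup G) := by
        intro g hg
        have hhoro : CGPAux.inHoro 𝓟 P x (CGPAux.act g c) := by
          by_contra hnh
          have hu : CGPAux.inHoro 𝓟 P x c := by
            rw [hcase]
            exact ⟨rfl, by simpa using (P : Subgroup G).one_mem⟩
          obtain ⟨p, hp⟩ := (hconn.preconnected c (CGPAux.act g c)).exists_walk_length_eq_dist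
          obtain ⟨z, q, r', hlen⟩ := CGPAux.cross_horoball p hu hnh
          have hdist : (cuspedGraph 𝓟 (S : Set G)).dist c (Sum.inl z) ≤ K := by
            have h1 := SimpleGraph.dist_le q
            have h2 := hmove g hg
            omega
          have hdl := CGPAux.depth_le_dist (S := S) ⟨q⟩
          rw [hcase] at hdl
          simp only [CGPAux.depth] at hdl
          rw [← hcase] at hdl
          omega
        rw [hcase] at hhoro
        obtain ⟨-, hmem⟩ := hhoro
        rw [CGPAux.mem_conjSubgroup]
        have : x⁻¹ * g * x = x⁻¹ * (g * x) := by group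
        rw [this]
        exact hmem
      exact hFnp ⟨(P : Subgroup G), P.2, x, hpara⟩
    exact CGPAux.card_le_of_moves hS hPfin hN c hdepth t
      (fun g hg => hmove g (htF g hg))
  · -- Branch 2: intersection of two distinct maximal parabolics
    obtain ⟨⟨Q₁, hQ₁, g₁, hle₁⟩, hmax₁⟩ := hM₁
    obtain ⟨⟨Q₂, hQ₂, g₂, hle₂⟩, hmax₂⟩ := hM₂
    have hM₁eq : conjSubgroup g₁ Q₁ = M₁ := hmax₁ _ ⟨Q₁, hQ₁, g₁, le_rfl⟩ hle₁
    have hM₂eq : conjSubgroup g₂ Q₂ = M₂ := hmax₂ _ ⟨Q₂, hQ₂, g₂, le_rfl⟩ hle₂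
    set P₁ : 𝓟 := ⟨Q₁, hQ₁⟩ with hP₁
    set P₂ : 𝓟 := ⟨Q₂, hQ₂⟩ with hP₂
    have hdistinct : ¬ (P₁ = P₂ ∧ g₁⁻¹ * g₂ ∈ Q₁) := by
      rintro ⟨hPP, hgg⟩
      have hQQ : Q₁ = Q₂ := congrArg Subtype.val hPP
      apply hne
      rw [← hM₁eq, ← hM₂eq, ← hQQ]
      exact CGPAux.conjSubgroup_eq_conjSubgroup hgg
    have hword : ∀ f : G, ∃ k : ℕ, f ∈ t →
        (g₁⁻¹ * f * g₁ ∈ wordBall ((S : Set G) ∩ (Q₁ : Set G)) k ∧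
         g₂⁻¹ * f * g₂ ∈ wordBall ((S : Set G) ∩ (Q₂ : Set G)) k) := by
      intro f
      by_cases hf : f ∈ t
      · have hf1 : g₁⁻¹ * f * g₁ ∈ Q₁ := by
          rw [← CGPAux.mem_conjSubgroup, hM₁eq]
          exact (hle (htF f hf)).1
        have hf2 : g₂⁻¹ * f * g₂ ∈ Q₂ := by
          rw [← CGPAux.mem_conjSubgroup, hM₂eq]
          exact (hle (htF f hf)).2
        rw [← hAd.2 Q₁ hQ₁] at hf1
        rw [← hAd.2 Q₂ hQ₂] at hf2
        obtain ⟨k₁, hk₁⟩ := CGPAux.exists_wordBall_of_mem_closure hf1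
        obtain ⟨k₂, hk₂⟩ := CGPAux.exists_wordBall_of_mem_closure hf2
        exact ⟨max k₁ k₂, fun _ =>
          ⟨CGPAux.wordBall_mono le_rfl (le_max_left _ _) hk₁,
           CGPAux.wordBall_mono le_rfl (le_max_right _ _) hk₂⟩⟩
      · exact ⟨0, fun h => absurd h hf⟩
    choose kk hkk using hword
    set n : ℕ := t.sup kk with hn
    have hn2 : ∀ f ∈ t, kk f ≤ 2 ^ (n + 1) := by
      intro f hf
      calc kk f ≤ n := Finset.le_sup hf
        _ ≤ 2 ^ n := Nat.le_of_lt (Nat.lt_two_pow_self (n := n))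
        _ ≤ 2 ^ (n + 1) := Nat.pow_le_pow_right (by norm_num) (Nat.le_succ n)
    set x : CuspedVertex G 𝓟 := Sum.inr (P₁, g₁, n) with hx
    set y : CuspedVertex G 𝓟 := Sum.inr (P₂, g₂, n) with hy
    have hmovex : ∀ f ∈ t, (cuspedGraph 𝓟 (S : Set G)).dist x (CGPAux.act f x) ≤ 1 := by
      intro f hf
      by_cases heq : x = CGPAux.act f x
      · rw [← heq, SimpleGraph.dist_self]
        omega
      · have hadj : (cuspedGraph 𝓟 (S : Set G)).Adj x (CGPAux.act f x) := by
          rw [CGPAux.cuspedGraph_adj]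
          refine ⟨heq, Or.inl ?_⟩
          show cuspedRel 𝓟 (S : Set G) (Sum.inr (P₁, g₁, n)) (Sum.inr (P₁, f * g₁, n))
          refine ⟨rfl, Or.inr ⟨rfl, ?_⟩⟩
          have hmem := CGPAux.wordBall_mono (le_refl ((S : Set G) ∩ (Q₁ : Set G)))
            (hn2 f hf) ((hkk f hf).1)
          have harr : g₁⁻¹ * (f * g₁) = g₁⁻¹ * f * g₁ := by group
          rw [harr]
          exact hmem
        simpa using SimpleGraph.dist_le (SimpleGraph.Walk.cons hadj SimpleGraph.Walk.nil)
    have hmovey : ∀ f ∈ t, (cuspedGraph 𝓟 (S : Set G)).dist y (CGPAux.act f y) ≤ 1 := by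
      intro f hf
      by_cases heq : y = CGPAux.act f y
      · rw [← heq, SimpleGraph.dist_self]
        omega
      · have hadj : (cuspedGraph 𝓟 (S : Set G)).Adj y (CGPAux.act f y) := by
          rw [CGPAux.cuspedGraph_adj]
          refine ⟨heq, Or.inl ?_⟩
          show cuspedRel 𝓟 (S : Set G) (Sum.inr (P₂, g₂, n)) (Sum.inr (P₂, f * g₂, n))
          refine ⟨rfl, Or.inr ⟨rfl, ?_⟩⟩
          have hmem := CGPAux.wordBall_mono (le_refl ((S : Set G) ∩ (Q₂ : Set G)))
            (hn2 f hf) ((hkk f hf).2)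
          have harr : g₂⁻¹ * (f * g₂) = g₂⁻¹ * f * g₂ := by group
          rw [harr]
          exact hmem
        simpa using SimpleGraph.dist_le (SimpleGraph.Walk.cons hadj SimpleGraph.Walk.nil)
    have hu : CGPAux.inHoro 𝓟 P₁ g₁ x := ⟨rfl, by simpa using Q₁.one_mem⟩
    have hv : ¬ CGPAux.inHoro 𝓟 P₁ g₁ y := by
      rintro ⟨hPP, hgg⟩
      exact hdistinct ⟨hPP.symm, hgg⟩
    obtain ⟨p, hp⟩ := (hconn.preconnected x y).exists_walk_length_eq_dist
    obtain ⟨z, q, r', hlen⟩ := CGPAux.cross_horoball p hu hv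
    have hsplit : (cuspedGraph 𝓟 (S : Set G)).dist x (Sum.inl z)
          + (cuspedGraph 𝓟 (S : Set G)).dist (Sum.inl z) y
        = (cuspedGraph 𝓟 (S : Set G)).dist x y := by
      have h1 := SimpleGraph.dist_le q
      have h2 := SimpleGraph.dist_le r'
      have h3 : (cuspedGraph 𝓟 (S : Set G)).dist x y ≤
          (cuspedGraph 𝓟 (S : Set G)).dist x (Sum.inl z)
            + (cuspedGraph 𝓟 (S : Set G)).dist (Sum.inl z) y :=
        hconn.dist_triangle
      omega
    have hmovem : ∀ f ∈ t, (cuspedGraph 𝓟 (S : Set G)).dist (Sum.inl z)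
        (CGPAux.act f (Sum.inl z)) ≤ K := by
      intro f hf
      have hreal := CGPAux.geodesic_displacement hconn hδ hsplit (hmovex f hf) (hmovey f hf)
        (CGPAux.dist_act f x y) (CGPAux.dist_act f x (Sum.inl z))
        (CGPAux.dist_act f (Sum.inl z) y)
      have hcast : ((cuspedGraph 𝓟 (S : Set G)).dist (Sum.inl z)
          (CGPAux.act f (Sum.inl z)) : ℝ) ≤ (K : ℝ) :=
        le_trans hreal hKreal2
      exact_mod_cast hcast
    exact CGPAux.card_le_of_moves hS hPfin hN (Sum.inl z) (by simp [CGPAux.depth]) t hmovem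
end
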